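/- arXiv:1501.00622 — 11 statements merged into one kernel-verified Lean document; each statement's English description precedes it below -/
import Mathlib

section
/- Let p : ℝ → ℝ satisfy p(0) = 0, p non-decreasing on [0,∞), and p concave on [0,τ] for some τ > 0. Then for every integer l ≥ 2 and all real numbers t_1, …, t_l, one has p(|t_1|) + ⋯ + p(|t_l|) ≥ min{ p(|t_1 + ⋯ + t_l|), p(τ) }. -/
/-- Lemma 1 of the paper: for a penalty function `p` with `p 0 = 0`, non-decreasing on
`[0, ∞)` and concave on `[0, τ]` (`τ > 0`), for any `l ≥ 2` reals `t₁, …, t_l`,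
`p |t₁| + ⋯ + p |t_l| ≥ min (p |t₁ + ⋯ + t_l|) (p τ)`. -/
theorem stmt_0 (p : ℝ → ℝ) (τ : ℝ) (hτ : 0 < τ)
    (hp0 : p 0 = 0)
    (hmono : MonotoneOn p (Set.Ici 0))
    (hconc : ConcaveOn ℝ (Set.Icc 0 τ) p)
    (l : ℕ) (hl : 2 ≤ l) (t : Fin l → ℝ) :
    min (p |∑ i, t i|) (p τ) ≤ ∑ i, p |t i| := by
  have hnn : ∀ s : ℝ, 0 ≤ s → 0 ≤ p s := by
    intro s hs
    have := hmono (Set.mem_Ici.2 le_rfl) (Set.mem_Ici.2 hs) hs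
    linarith [hp0]
  have aux : ∀ S ∈ Set.Icc (0:ℝ) τ, ∀ x : ℝ, 0 ≤ x → x ≤ S → x / S * p S ≤ p x := by
    intro S hS x hx hxS
    rcases eq_or_lt_of_le (hx.trans hxS) with h | hSpos
    · have hx0 : x = 0 := le_antisymm (hxS.trans h.symm.le) hx
      simp [hx0, ← h, hp0]
    · have hb : 0 ≤ x / S := div_nonneg hx hSpos.le
      have ha : 0 ≤ 1 - x / S := by
        have : x / S ≤ 1 := (div_le_one hSpos).2 hxS
        linarith
      have key := hconc.2 (Set.mem_Icc.2 ⟨le_rfl, hτ.le⟩) hS ha hb (by ring)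
      have hxval : (1 - x / S) • (0:ℝ) + (x / S) • S = x := by
        rw [smul_eq_mul, smul_eq_mul, mul_zero, zero_add, div_mul_cancel₀ x hSpos.ne']
      rw [hxval] at key
      simpa [hp0, smul_eq_mul] using key
  set S := ∑ i, |t i| with hSdef
  have hSnn : 0 ≤ S := Finset.sum_nonneg fun i _ => abs_nonneg _
  have hterm_nn : ∀ i ∈ Finset.univ, 0 ≤ p |t i| := fun i _ => hnn _ (abs_nonneg _)
  by_cases hcase : S < τ
  · -- all terms small; show min ≤ p |∑ t i| ≤ p S ≤ ∑ p |t i|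
    have hSτ : S ∈ Set.Icc (0:ℝ) τ := ⟨hSnn, hcase.le⟩
    have habs : |∑ i, t i| ≤ S := Finset.abs_sum_le_sum_abs _ _
    have h1 : p |∑ i, t i| ≤ p S :=
      hmono (Set.mem_Ici.2 (abs_nonneg _)) (Set.mem_Ici.2 hSnn) habs
    have h2 : p S ≤ ∑ i, p |t i| := by
      rcases eq_or_lt_of_le hSnn with h0 | hSpos
      · rw [← h0, hp0]
        exact Finset.sum_nonneg hterm_nn
      · have hle : ∀ i ∈ Finset.univ, |t i| / S * p S ≤ p |t i| := by
          intro i _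
          refine aux S hSτ _ (abs_nonneg _) ?_
          exact Finset.single_le_sum (fun j _ => abs_nonneg (t j)) (Finset.mem_univ i)
        calc p S = (∑ i, |t i| / S) * p S := by
              rw [← Finset.sum_div, ← hSdef, div_self hSpos.ne', one_mul]
          _ = ∑ i, |t i| / S * p S := by rw [Finset.sum_mul]
          _ ≤ ∑ i, p |t i| := Finset.sum_le_sum hle
    exact le_trans (min_le_left _ _) (h1.trans h2)
  · -- S ≥ τ; show p τ ≤ ∑ p |t i|
    push_neg at hcase
    have hτIcc : τ ∈ Set.Icc (0:ℝ) τ := ⟨hτ.le, le_rfl⟩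
    have hq : ∀ i ∈ Finset.univ, min |t i| τ / τ * p τ ≤ p |t i| := by
      intro i _
      have hqnn : 0 ≤ min |t i| τ := le_min (abs_nonneg _) hτ.le
      have h1 : min |t i| τ / τ * p τ ≤ p (min |t i| τ) :=
        aux τ hτIcc _ hqnn (min_le_right _ _)
      have h2 : p (min |t i| τ) ≤ p |t i| :=
        hmono (Set.mem_Ici.2 hqnn) (Set.mem_Ici.2 (abs_nonneg _)) (min_le_left _ _)
      exact h1.trans h2
    have hsumq : τ ≤ ∑ i, min |t i| τ := by
      by_cases hall : ∀ i, |t i| ≤ τ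
      · calc τ ≤ S := hcase
          _ = ∑ i, min |t i| τ := Finset.sum_congr rfl fun i _ => (min_eq_left (hall i)).symm
      · push_neg at hall
        obtain ⟨i, hi⟩ := hall
        have : min |t i| τ = τ := min_eq_right hi.le
        calc τ = min |t i| τ := this.symm
          _ ≤ ∑ j, min |t j| τ :=
            Finset.single_le_sum (f := fun j => min |t j| τ) (fun j _ => le_min (abs_nonneg _) hτ.le) (Finset.mem_univ i)
    have hpτnn : 0 ≤ p τ := hnn τ hτ.le
    have : p τ ≤ ∑ i, p |t i| := by
      calc p τ = τ / τ * p τ := by rw [div_self hτ.ne', one_mul]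
        _ ≤ (∑ i, min |t i| τ) / τ * p τ := by
            apply mul_le_mul_of_nonneg_right _ hpτnn
            gcongr
        _ = ∑ i, min |t i| τ / τ * p τ := by rw [Finset.sum_div, Finset.sum_mul]
        _ ≤ ∑ i, p |t i| := Finset.sum_le_sum hq
    exact le_trans (min_le_right _ _) this
end

section
/- Let p : ℝ → ℝ satisfy p(0) = 0 and suppose p is concave but not linear on [0, τ₀] for some τ₀ > 0. Then C₁ := (p(τ₀/3) + p(2τ₀/3) − p(τ₀)) / (τ₀/3) is strictly positive, i.e., p(τ₀/3) + p(2τ₀/3) > p(τ₀). -/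
/-- From the proof of Lemma 2: if `p 0 = 0` and `p` is concave but not linear on
`[0, τ₀]`, then `C₁ := (p (τ₀/3) + p (2τ₀/3) − p τ₀) / (τ₀/3) > 0`, i.e.
`p (τ₀/3) + p (2τ₀/3) > p τ₀`. -/
theorem stmt_3 (p : ℝ → ℝ) (τ₀ : ℝ) (hτ₀ : 0 < τ₀)
    (hp0 : p 0 = 0)
    (hconc : ConcaveOn ℝ (Set.Icc 0 τ₀) p)
    (hnotlin : ¬ ∃ c : ℝ, ∀ t ∈ Set.Icc (0 : ℝ) τ₀, p t = c * t) :
    0 < (p (τ₀ / 3) + p (2 * τ₀ / 3) - p τ₀) / (τ₀ / 3) ∧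
      p τ₀ < p (τ₀ / 3) + p (2 * τ₀ / 3) := by
  have hτ0 : (τ₀ : ℝ) ≠ 0 := ne_of_gt hτ₀
  set c : ℝ := p τ₀ / τ₀ with hc
  have hcτ : c * τ₀ = p τ₀ := by rw [hc]; exact div_mul_cancel₀ _ hτ0
  have h0mem : (0 : ℝ) ∈ Set.Icc (0:ℝ) τ₀ := Set.left_mem_Icc.2 hτ₀.le
  have hτmem : τ₀ ∈ Set.Icc (0:ℝ) τ₀ := Set.right_mem_Icc.2 hτ₀.le
  -- lower bound : chord below p
  have hlow : ∀ t ∈ Set.Icc (0:ℝ) τ₀, c * t ≤ p t := by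
    intro t ht
    obtain ⟨ht0, ht1⟩ := ht
    have ha : (0:ℝ) ≤ 1 - t / τ₀ := by
      have : t / τ₀ ≤ 1 := (div_le_one hτ₀).2 ht1
      linarith
    have hb : (0:ℝ) ≤ t / τ₀ := div_nonneg ht0 hτ₀.le
    have h := hconc.2 h0mem hτmem ha hb (by ring)
    simp only [smul_eq_mul, hp0, mul_zero, zero_add] at h
    have harg : t / τ₀ * τ₀ = t := div_mul_cancel₀ t hτ0
    rw [harg] at h
    calc c * t = t / τ₀ * p τ₀ := by rw [hc]; field_simp
    _ ≤ p t := h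
  -- if p(τ₀/3) = c·(τ₀/3), p is linear: contradiction
  have hne : p (τ₀ / 3) ≠ c * (τ₀ / 3) := by
    intro heq
    apply hnotlin
    refine ⟨c, fun t ht => ?_⟩
    obtain ⟨ht0, ht1⟩ := ht
    refine le_antisymm ?_ (hlow t ⟨ht0, ht1⟩)
    rcases le_or_gt t (τ₀ / 3) with hcase | hcase
    · -- τ₀/3 between t and τ₀
      have hden : (0:ℝ) < τ₀ - t := by linarith
      set a : ℝ := (τ₀ - τ₀ / 3) / (τ₀ - t) with hadef
      set b : ℝ := (τ₀ / 3 - t) / (τ₀ - t) with hbdef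
      have ha : 0 < a := by
        apply div_pos; linarith; exact hden
      have hb : 0 ≤ b := by
        apply div_nonneg; linarith; exact hden.le
      have hab : a + b = 1 := by
        rw [hadef, hbdef, ← add_div, div_eq_one_iff_eq hden.ne']; ring
      have h := hconc.2 ⟨ht0, ht1⟩ hτmem ha.le hb hab
      simp only [smul_eq_mul] at h
      have harg : a * t + b * τ₀ = τ₀ / 3 := by
        rw [hadef, hbdef, div_mul_eq_mul_div, div_mul_eq_mul_div, ← add_div, div_eq_iff hden.ne']; ring
      rw [harg, heq] at h
      -- a * p t + b * p τ₀ ≤ c * (τ₀/3)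
      have hper : c * (τ₀ / 3) = a * (c * t) + b * (c * τ₀) := by
        rw [← harg]; ring
      rw [hper, hcτ] at h
      have : a * p t ≤ a * (c * t) := by linarith
      exact le_of_mul_le_mul_left this ha
    · -- τ₀/3 between 0 and t
      have htpos : (0:ℝ) < t := by linarith
      set b : ℝ := (τ₀ / 3) / t with hbdef
      have hb : 0 < b := by apply div_pos; linarith; exact htpos
      have hb1 : b ≤ 1 := by
        rw [hbdef, div_le_one htpos]; linarith
      have h := hconc.2 h0mem ⟨ht0, ht1⟩ (by linarith : (0:ℝ) ≤ 1 - b) hb.le (by ring)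
      simp only [smul_eq_mul, hp0, mul_zero, zero_add] at h
      have harg : b * t = τ₀ / 3 := by
        rw [hbdef]; field_simp
      rw [harg, heq] at h
      have hper : c * (τ₀ / 3) = b * (c * t) := by
        rw [← harg]; ring
      rw [hper] at h
      exact le_of_mul_le_mul_left h hb
  have h13 : τ₀ / 3 ∈ Set.Icc (0:ℝ) τ₀ := ⟨by linarith, by linarith⟩
  have h23 : 2 * τ₀ / 3 ∈ Set.Icc (0:ℝ) τ₀ := ⟨by linarith, by linarith⟩
  have hs1 : c * (τ₀ / 3) < p (τ₀ / 3) := lt_of_le_of_ne (hlow _ h13) (Ne.symm hne)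
  have hs2 : c * (2 * τ₀ / 3) ≤ p (2 * τ₀ / 3) := hlow _ h23
  have hmain : p τ₀ < p (τ₀ / 3) + p (2 * τ₀ / 3) := by
    nlinarith [hcτ]
  exact ⟨div_pos (by linarith) (by linarith), hmain⟩
end

section
/- Let p : ℝ → ℝ satisfy p(0) = 0, p non-decreasing on [0,∞), p concave on [0,τ], and p not linear on [0,τ₀], where 0 < τ₀ < τ. Set C₁ := (p(τ₀/3) + p(2τ₀/3) − p(τ₀)) / (τ₀/3). Fix t̃ ∈ (τ₀, τ) and let δ̄ := min{ τ₀/3, t̃ − τ₀, τ − t̃ }. Then for every δ ∈ (0, δ̄), every integer l ≥ 2, and all reals t_1, …, t_l with t_1 + ⋯ + t_l = t̃: if p(|t_1|) + ⋯ + p(|t_l|) < p(t̃) + C₁·δ, then there exists an index i such that |t_i − t̃| < δ and |t_j| < δ for all j ≠ i. -/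
lemma st4_nonneg (p : ℝ → ℝ) (hp0 : p 0 = 0) (hmono : MonotoneOn p (Set.Ici 0))
    {x : ℝ} (hx : 0 ≤ x) : 0 ≤ p x := by
  have := hmono (Set.mem_Ici.2 le_rfl) (Set.mem_Ici.2 hx) hx
  linarith [this, hp0.symm ▸ this]

lemma st4_combo (p : ℝ → ℝ) (τ : ℝ) (hconc : ConcaveOn ℝ (Set.Icc 0 τ) p)
    {x y μ : ℝ} (hx : x ∈ Set.Icc 0 τ) (hy : y ∈ Set.Icc 0 τ)
    (h0 : 0 ≤ μ) (h1 : μ ≤ 1) :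
    μ * p x + (1 - μ) * p y ≤ p (μ * x + (1 - μ) * y) := by
  have := hconc.2 hx hy h0 (by linarith : (0:ℝ) ≤ 1 - μ) (by ring)
  simpa [smul_eq_mul] using this

lemma st4_superadd (p : ℝ → ℝ) (τ : ℝ) (hp0 : p 0 = 0)
    (hconc : ConcaveOn ℝ (Set.Icc 0 τ) p)
    {a b : ℝ} (ha : 0 ≤ a) (hb : 0 ≤ b) (hab : a + b ≤ τ) :
    p (a + b) ≤ p a + p b := by
  rcases eq_or_lt_of_le (by linarith : (0:ℝ) ≤ a + b) with h | h
  · have ha0 : a = 0 := by linarith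
    have hb0 : b = 0 := by linarith
    simp [ha0, hb0, hp0]
  · have hs : a + b ∈ Set.Icc (0:ℝ) τ := ⟨by linarith, hab⟩
    have h0m : (0:ℝ) ∈ Set.Icc (0:ℝ) τ := ⟨le_rfl, by linarith⟩
    have h1 := st4_combo p τ hconc hs h0m
      (by positivity : (0:ℝ) ≤ a / (a+b)) (by rw [div_le_one h]; linarith)
    have h2 := st4_combo p τ hconc hs h0m
      (by positivity : (0:ℝ) ≤ b / (a+b)) (by rw [div_le_one h]; linarith)
    rw [hp0] at h1 h2
    have e1 : a / (a+b) * (a+b) + (1 - a/(a+b)) * 0 = a := by field_simp; ring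
    have e2 : b / (a+b) * (a+b) + (1 - b/(a+b)) * 0 = b := by field_simp; ring
    rw [e1] at h1; rw [e2] at h2
    have e3 : a / (a+b) * p (a+b) + b/(a+b) * p (a+b) = p (a+b) := by
      field_simp
    linarith

lemma st4_cap_pair (p : ℝ → ℝ) (τ : ℝ) (hp0 : p 0 = 0)
    (hmono : MonotoneOn p (Set.Ici 0)) (hconc : ConcaveOn ℝ (Set.Icc 0 τ) p)
    (hτ : 0 < τ) {a b : ℝ} (ha : 0 ≤ a) (hb : 0 ≤ b) :
    p (min (a + b) τ) ≤ p b + p (min a τ) := by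
  rcases le_or_gt (a + b) τ with h | h
  · rw [min_eq_left h, min_eq_left (by linarith)]
    linarith [st4_superadd p τ hp0 hconc ha hb h]
  · rw [min_eq_right h.le]
    rcases le_or_gt τ a with h2 | h2
    · rw [min_eq_right h2]
      linarith [st4_nonneg p hp0 hmono hb]
    · rw [min_eq_left h2.le]
      have h3 : p τ ≤ p a + p (τ - a) := by
        have := st4_superadd p τ hp0 hconc ha (by linarith : (0:ℝ) ≤ τ - a)
          (by linarith)
        simpa using this
      have h4 : p (τ - a) ≤ p b :=
        hmono (Set.mem_Ici.2 (by linarith)) (Set.mem_Ici.2 hb) (by linarith)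
      linarith

lemma st4_cap_sum (p : ℝ → ℝ) (τ : ℝ) (hp0 : p 0 = 0)
    (hmono : MonotoneOn p (Set.Ici 0)) (hconc : ConcaveOn ℝ (Set.Icc 0 τ) p)
    (hτ : 0 < τ) {ι : Type*} (a : ι → ℝ) (s : Finset ι)
    (hnn : ∀ i ∈ s, 0 ≤ a i) :
    p (min (∑ i ∈ s, a i) τ) ≤ ∑ i ∈ s, p (a i) := by
  classical
  induction s using Finset.cons_induction with
  | empty => simp [min_eq_left hτ.le, hp0]
  | cons i s hi ih =>
    rw [Finset.sum_cons, Finset.sum_cons]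
    have hnn' : ∀ j ∈ s, 0 ≤ a j := fun j hj => hnn j (Finset.mem_cons_of_mem hj)
    have hsum_nn : 0 ≤ ∑ j ∈ s, a j := Finset.sum_nonneg hnn'
    have hai : 0 ≤ a i := hnn i (Finset.mem_cons_self i s)
    have h1 := st4_cap_pair p τ hp0 hmono hconc hτ hsum_nn hai
    have h2 : p (min (∑ j ∈ s, a j) τ) ≤ ∑ j ∈ s, p (a j) := ih hnn'
    have hmono2 : p (min (a i + ∑ j ∈ s, a j) τ) = p (min (∑ j ∈ s, a j + a i) τ) := by ring_nf
    rw [hmono2]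
    linarith

-- for concave p: p δ + p (s-δ) ≤ p u + p (s-u) when δ ≤ u ≤ s-δ
lemma st4_pair_ge (p : ℝ → ℝ) (τ : ℝ) (hconc : ConcaveOn ℝ (Set.Icc 0 τ) p)
    {dd u s : ℝ} (hd : 0 ≤ dd) (h1 : dd ≤ u) (h2 : u ≤ s - dd)
    (h3 : 2 * dd < s) (h4 : s ≤ τ) :
    p dd + p (s - dd) ≤ p u + p (s - u) := by
  set L : ℝ := (s - dd - u) / (s - 2 * dd) with hL
  have hden : 0 < s - 2 * dd := by linarith
  have hL0 : 0 ≤ L := div_nonneg (by linarith) (by linarith)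
  have hL1 : L ≤ 1 := by rw [hL, div_le_one hden]; linarith
  have hdm : dd ∈ Set.Icc (0:ℝ) τ := ⟨hd, by linarith⟩
  have hsm : s - dd ∈ Set.Icc (0:ℝ) τ := ⟨by linarith, by linarith⟩
  have c1 := st4_combo p τ hconc hdm hsm hL0 hL1
  have c2 := st4_combo p τ hconc hsm hdm hL0 hL1
  have e1 : L * dd + (1 - L) * (s - dd) = u := by
    have := div_mul_cancel₀ (s - dd - u) (ne_of_gt hden)
    linear_combination -this - (s - 2 * dd) * hL
  have e2 : L * (s - dd) + (1 - L) * dd = s - u := by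
    have := div_mul_cancel₀ (s - dd - u) (ne_of_gt hden)
    linear_combination this + (s - 2 * dd) * hL
  rw [e1] at c1; rw [e2] at c2
  linarith

-- key gap estimate at δ
lemma st4_gdelta (p : ℝ → ℝ) (τ τ₀ : ℝ) (hp0 : p 0 = 0)
    (hconc : ConcaveOn ℝ (Set.Icc 0 τ) p)
    (hτ₀ : 0 < τ₀) (hτ : τ₀ < τ)
    {dd s : ℝ} (hd0 : 0 < dd) (hd : 3 * dd ≤ τ₀) (hs1 : τ₀ ≤ s) (hs2 : s ≤ τ) :
    p s + ((p (τ₀ / 3) + p (2 * τ₀ / 3) - p τ₀) / (τ₀ / 3)) * dd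
      ≤ p dd + p (s - dd) := by
  set μ : ℝ := dd / (τ₀ / 3) with hμ
  have hτ3 : 0 < τ₀ / 3 := by linarith
  have hμ0 : 0 ≤ μ := by positivity
  have hμ1 : μ ≤ 1 := by rw [hμ, div_le_one hτ3]; linarith
  have m0 : (0:ℝ) ∈ Set.Icc (0:ℝ) τ := ⟨le_rfl, by linarith⟩
  have m1 : τ₀ / 3 ∈ Set.Icc (0:ℝ) τ := ⟨by linarith, by linarith⟩
  have m2 : s ∈ Set.Icc (0:ℝ) τ := ⟨by linarith, hs2⟩
  have m3 : s - τ₀ / 3 ∈ Set.Icc (0:ℝ) τ := ⟨by linarith, by linarith⟩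
  have m4 : 2 * τ₀ / 3 ∈ Set.Icc (0:ℝ) τ := ⟨by linarith, by linarith⟩
  have m5 : τ₀ ∈ Set.Icc (0:ℝ) τ := ⟨by linarith, by linarith⟩
  -- (a): μ * p (τ₀/3) ≤ p dd
  have ca := st4_combo p τ hconc m1 m0 hμ0 hμ1
  have ea : μ * (τ₀ / 3) + (1 - μ) * 0 = dd := by
    have := div_mul_cancel₀ dd (ne_of_gt hτ3)
    linear_combination (τ₀ / 3) * hμ + this
  rw [ea, hp0] at ca
  -- (b): μ * p (s - τ₀/3) + (1-μ) * p s ≤ p (s - dd)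
  have cb := st4_combo p τ hconc m3 m2 hμ0 hμ1
  have eb : μ * (s - τ₀ / 3) + (1 - μ) * s = s - dd := by
    have := div_mul_cancel₀ dd (ne_of_gt hτ3)
    linear_combination -(τ₀ / 3) * hμ - this
  rw [eb] at cb
  -- (c): p s + p (2τ₀/3) ≤ p τ₀ + p (s - τ₀/3)
  have hcc : p s + p (2 * τ₀ / 3) ≤ p τ₀ + p (s - τ₀ / 3) := by
    rcases eq_or_lt_of_le hs1 with h | h
    · have e : τ₀ - τ₀ / 3 = 2 * τ₀ / 3 := by ring
      rw [← h, e]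
    · set K : ℝ := (τ₀ / 3) / (s - 2 * τ₀ / 3) with hK
      have hden : 0 < s - 2 * τ₀ / 3 := by linarith
      have hK0 : 0 ≤ K := by positivity
      have hK1 : K ≤ 1 := by rw [hK, div_le_one hden]; linarith
      have hne : s - 2 * τ₀ / 3 ≠ 0 := ne_of_gt hden
      have d1 := st4_combo p τ hconc m4 m2 hK0 hK1
      have d2 := st4_combo p τ hconc m2 m4 hK0 hK1
      have hKd : K * (s - 2 * τ₀ / 3) = τ₀ / 3 := by
        rw [hK]; exact div_mul_cancel₀ _ hne
      have f1 : K * (2 * τ₀ / 3) + (1 - K) * s = s - τ₀ / 3 := by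
        linear_combination -hKd
      have f2 : K * s + (1 - K) * (2 * τ₀ / 3) = τ₀ := by
        linear_combination hKd
      rw [f1] at d1; rw [f2] at d2
      linarith
  have efin : ((p (τ₀ / 3) + p (2 * τ₀ / 3) - p τ₀) / (τ₀ / 3)) * dd
      = μ * (p (τ₀ / 3) + p (2 * τ₀ / 3) - p τ₀) := by
    rw [hμ]; field_simp
  rw [efin]
  nlinarith [mul_le_mul_of_nonneg_left hcc hμ0]

lemma st4_gap (p : ℝ → ℝ) (τ τ₀ : ℝ) (hp0 : p 0 = 0)
    (hmono : MonotoneOn p (Set.Ici 0)) (hconc : ConcaveOn ℝ (Set.Icc 0 τ) p)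
    (hτ₀ : 0 < τ₀) (hτ : τ₀ < τ)
    {dd a b : ℝ} (hd0 : 0 < dd) (hd : 3 * dd ≤ τ₀)
    (hb : dd ≤ b) (hba : b ≤ a) (hab : τ₀ ≤ a + b) :
    p (min (a + b) τ) + ((p (τ₀ / 3) + p (2 * τ₀ / 3) - p τ₀) / (τ₀ / 3)) * dd
      ≤ p a + p b := by
  rcases le_or_gt (a + b) τ with h | h
  · rw [min_eq_left h]
    have hpg := st4_pair_ge p τ hconc hd0.le hb (by linarith) (by linarith) h
    have hgd := st4_gdelta p τ τ₀ hp0 hconc hτ₀ hτ hd0 hd hab h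
    have : a + b - b = a := by ring
    rw [this] at hpg
    linarith
  · rw [min_eq_right h.le]
    have hgd := st4_gdelta p τ τ₀ hp0 hconc hτ₀ hτ hd0 hd (le_of_lt hτ) le_rfl
    rcases le_or_gt b (τ - dd) with h2 | h2
    · have hpg := st4_pair_ge p τ hconc hd0.le hb h2 (by linarith) le_rfl
      have hm : p (τ - b) ≤ p a :=
        hmono (Set.mem_Ici.2 (by linarith)) (Set.mem_Ici.2 (by linarith))
          (by linarith)
      linarith
    · have hm1 : p (τ - dd) ≤ p a :=
        hmono (Set.mem_Ici.2 (by linarith)) (Set.mem_Ici.2 (by linarith))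
          (by linarith)
      have hm2 : p dd ≤ p b :=
        hmono (Set.mem_Ici.2 hd0.le) (Set.mem_Ici.2 (by linarith)) hb
      linarith

lemma st4_chunk {ι : Type*} [DecidableEq ι] (a : ι → ℝ) (s : Finset ι) (dd : ℝ)
    (hd0 : 0 < dd) (hsm : ∀ j ∈ s, a j < dd) (htot : dd ≤ ∑ j ∈ s, a j) :
    ∃ S ⊆ s, dd ≤ ∑ j ∈ S, a j ∧ ∑ j ∈ S, a j < 2 * dd := by
  classical
  have hne : (s.powerset.filter (fun S => dd ≤ ∑ j ∈ S, a j)).Nonempty :=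
    ⟨s, by simp [htot]⟩
  obtain ⟨S, hS, hmin⟩ := (s.powerset.filter
    (fun S => dd ≤ ∑ j ∈ S, a j)).exists_min_image Finset.card hne
  rw [Finset.mem_filter, Finset.mem_powerset] at hS
  obtain ⟨hSs, hSsum⟩ := hS
  refine ⟨S, hSs, hSsum, ?_⟩
  have hSne : S.Nonempty := by
    rcases S.eq_empty_or_nonempty with rfl | h
    · simp at hSsum; linarith
    · exact h
  obtain ⟨j₀, hj₀⟩ := hSne
  have herase : ∑ j ∈ S.erase j₀, a j < dd := by
    by_contra hcon
    push_neg at hcon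
    have hmem : S.erase j₀ ∈ s.powerset.filter (fun T => dd ≤ ∑ j ∈ T, a j) := by
      rw [Finset.mem_filter, Finset.mem_powerset]
      exact ⟨(Finset.erase_subset _ _).trans hSs, hcon⟩
    have := hmin _ hmem
    have hcard : (S.erase j₀).card < S.card := Finset.card_erase_lt_of_mem hj₀
    omega
  have hsplit : ∑ j ∈ S, a j = a j₀ + ∑ j ∈ S.erase j₀, a j :=
    (Finset.add_sum_erase _ _ hj₀).symm
  have hj₀lt : a j₀ < dd := hsm j₀ (hSs hj₀)
  linarith

/-- Main localization assertion of Lemma 2 of the paper. -/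
theorem stmt_4 (p : ℝ → ℝ) (τ τ₀ ttil : ℝ)
    (hτ₀ : 0 < τ₀) (hτ : τ₀ < τ)
    (hp0 : p 0 = 0)
    (hmono : MonotoneOn p (Set.Ici 0))
    (hconc : ConcaveOn ℝ (Set.Icc 0 τ) p)
    (hnotlin : ¬ ∃ c : ℝ, ∀ t ∈ Set.Icc (0 : ℝ) τ₀, p t = c * t)
    (httil : ttil ∈ Set.Ioo τ₀ τ)
    (δ : ℝ) (hδ0 : 0 < δ)
    (hδ : δ < min (τ₀ / 3) (min (ttil - τ₀) (τ - ttil)))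
    (l : ℕ) (hl : 2 ≤ l) (t : Fin l → ℝ)
    (hsum : ∑ i, t i = ttil)
    (hlt : ∑ i, p |t i| <
      p ttil + ((p (τ₀ / 3) + p (2 * τ₀ / 3) - p τ₀) / (τ₀ / 3)) * δ) :
    ∃ i, |t i - ttil| < δ ∧ ∀ j, j ≠ i → |t j| < δ := by
  classical
  obtain ⟨ht1, ht2⟩ := httil
  rw [lt_min_iff, lt_min_iff] at hδ
  obtain ⟨hδ1, hδ2, hδ3⟩ := hδ
  have hτpos : (0:ℝ) < τ := lt_trans hτ₀ hτ
  have hδτ : δ ≤ τ := by linarith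
  have habs : ∀ i ∈ (Finset.univ : Finset (Fin l)), 0 ≤ |t i| :=
    fun i _ => abs_nonneg _
  have hstot : ttil ≤ ∑ i, |t i| := by
    calc ttil = |∑ i, t i| := by rw [hsum, abs_of_pos (by linarith)]
    _ ≤ ∑ i, |t i| := Finset.abs_sum_le_sum_abs _ _
  -- core contradiction machine
  have core : ∀ S : Finset (Fin l), δ ≤ ∑ i ∈ S, |t i| →
      δ ≤ ∑ i ∈ Sᶜ, |t i| → False := by
    intro S hx hy
    set x := ∑ i ∈ S, |t i| with hxdef
    set y := ∑ i ∈ Sᶜ, |t i| with hydef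
    have hxy : x + y = ∑ i, |t i| := Finset.sum_add_sum_compl S _
    have cap1 : p (min x τ) ≤ ∑ i ∈ S, p |t i| :=
      st4_cap_sum p τ hp0 hmono hconc hτpos _ S (fun i _ => abs_nonneg _)
    have cap2 : p (min y τ) ≤ ∑ i ∈ Sᶜ, p |t i| :=
      st4_cap_sum p τ hp0 hmono hconc hτpos _ Sᶜ (fun i _ => abs_nonneg _)
    have hx' : δ ≤ min x τ := le_min hx hδτ
    have hy' : δ ≤ min y τ := le_min hy hδτ
    have hsum2 : ttil ≤ min x τ + min y τ := by
      rcases le_or_gt x τ with h1 | h1 <;> rcases le_or_gt y τ with h2 | h2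
      · rw [min_eq_left h1, min_eq_left h2]; linarith
      · rw [min_eq_left h1, min_eq_right h2.le]; linarith
      · rw [min_eq_right h1.le, min_eq_left h2]; linarith
      · rw [min_eq_right h1.le, min_eq_right h2.le]; linarith
    have hpm : ∀ u v : ℝ, δ ≤ v → v ≤ u → ttil ≤ u + v →
        p ttil + ((p (τ₀ / 3) + p (2 * τ₀ / 3) - p τ₀) / (τ₀ / 3)) * δ
          ≤ p u + p v := by
      intro u v huv hvu hsum3
      have hgap := st4_gap p τ τ₀ hp0 hmono hconc hτ₀ hτ hδ0 (by linarith)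
        huv hvu (by linarith)
      have hmin : ttil ≤ min (u + v) τ := le_min hsum3 ht2.le
      have : p ttil ≤ p (min (u + v) τ) :=
        hmono (Set.mem_Ici.2 (by linarith)) (Set.mem_Ici.2 (by linarith)) hmin
      linarith
    have hsplit : ∑ i ∈ S, p |t i| + ∑ i ∈ Sᶜ, p |t i| = ∑ i, p |t i| :=
      Finset.sum_add_sum_compl S _
    rcases le_total (min x τ) (min y τ) with ho | ho
    · have := hpm (min y τ) (min x τ) hx' ho (by linarith)
      linarith
    · have := hpm (min x τ) (min y τ) hy' ho (by linarith)
      linarith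
  by_contra hcon
  push_neg at hcon
  set F := Finset.univ.filter (fun i : Fin l => δ ≤ |t i|) with hF
  rcases lt_or_ge 1 F.card with hFc | hFc
  · obtain ⟨j, hj, k, hk, hjk⟩ := Finset.one_lt_card.1 hFc
    rw [hF, Finset.mem_filter] at hj hk
    refine core {j} ?_ ?_
    · simp [hj.2]
    · have hkm : k ∈ ({j} : Finset (Fin l))ᶜ := by
        rw [Finset.mem_compl, Finset.mem_singleton]
        exact fun h => hjk h.symm
      exact le_trans hk.2
        (Finset.single_le_sum (fun i _ => abs_nonneg (t i)) hkm)
  · obtain ⟨i₀, hsmall⟩ : ∃ i : Fin l, ∀ j, j ≠ i → |t j| < δ := by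
      rcases F.eq_empty_or_nonempty with hFe | ⟨i₀, hi₀⟩
      · refine ⟨⟨0, by omega⟩, fun j _ => ?_⟩
        by_contra h
        push_neg at h
        have : j ∈ F := by rw [hF, Finset.mem_filter]; exact ⟨Finset.mem_univ _, h⟩
        rw [hFe] at this; exact absurd this (Finset.notMem_empty j)
      · refine ⟨i₀, fun j hne => ?_⟩
        by_contra h
        push_neg at h
        have hjF : j ∈ F := by rw [hF, Finset.mem_filter]; exact ⟨Finset.mem_univ _, h⟩
        have : 1 < F.card := Finset.one_lt_card.2 ⟨j, hjF, i₀, hi₀, hne⟩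
        omega
    have hfar : δ ≤ |t i₀ - ttil| := by
      by_contra h
      push_neg at h
      obtain ⟨j, hjne, hj2⟩ := hcon i₀ h
      exact absurd hj2 (not_le.2 (hsmall j hjne))
    have hrest : ∑ j ∈ Finset.univ.erase i₀, t j = ttil - t i₀ := by
      rw [Finset.sum_erase_eq_sub (Finset.mem_univ i₀), hsum]
    have hrabs : δ ≤ ∑ j ∈ Finset.univ.erase i₀, |t j| := by
      calc δ ≤ |t i₀ - ttil| := hfar
      _ = |ttil - t i₀| := abs_sub_comm _ _
      _ = |∑ j ∈ Finset.univ.erase i₀, t j| := by rw [hrest]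
      _ ≤ ∑ j ∈ Finset.univ.erase i₀, |t j| := Finset.abs_sum_le_sum_abs _ _
    obtain ⟨S, hSsub, hS1, hS2⟩ := st4_chunk (fun j => |t j|)
      (Finset.univ.erase i₀) δ hδ0
      (fun j hj => hsmall j (Finset.mem_erase.1 hj).1) hrabs
    refine core S hS1 ?_
    have hsplit : ∑ i ∈ S, |t i| + ∑ i ∈ Sᶜ, |t i| = ∑ i, |t i| :=
      Finset.sum_add_sum_compl S _
    linarith
end

section
/- Let p : ℝ → ℝ satisfy p(0) = 0 and p concave on [0, τ₀] for some τ₀ > 0. Then the function s ↦ (p(s) + p(τ₀ − s) − p(τ₀)) / s is non-increasing on (0, τ₀]: for all 0 < s₁ ≤ s₂ ≤ τ₀, (p(s₁) + p(τ₀ − s₁) − p(τ₀))/s₁ ≥ (p(s₂) + p(τ₀ − s₂) − p(τ₀))/s₂. -/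
/-- Property (iii) in the proof of Lemma 2: if `p 0 = 0` and `p` is concave on
`[0, τ₀]`, then `s ↦ (p s + p (τ₀ − s) − p τ₀) / s` is non-increasing on `(0, τ₀]`. -/
theorem stmt_5 (p : ℝ → ℝ) (τ₀ : ℝ) (hτ₀ : 0 < τ₀)
    (hp0 : p 0 = 0)
    (hconc : ConcaveOn ℝ (Set.Icc 0 τ₀) p)
    (s₁ s₂ : ℝ) (h1 : 0 < s₁) (h12 : s₁ ≤ s₂) (h2 : s₂ ≤ τ₀) :
    (p s₂ + p (τ₀ - s₂) - p τ₀) / s₂ ≤ (p s₁ + p (τ₀ - s₁) - p τ₀) / s₁ := by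
  have hs2 : 0 < s₂ := lt_of_lt_of_le h1 h12
  set t := s₁ / s₂ with ht
  have ht0 : 0 ≤ t := div_nonneg h1.le hs2.le
  have ht1 : t ≤ 1 := (div_le_one hs2).2 h12
  have hts : t * s₂ = s₁ := div_mul_cancel₀ _ hs2.ne'
  have hmem0 : (0 : ℝ) ∈ Set.Icc 0 τ₀ := ⟨le_refl _, hτ₀.le⟩
  have hmem2 : s₂ ∈ Set.Icc 0 τ₀ := ⟨hs2.le, h2⟩
  have hmemτ : τ₀ ∈ Set.Icc 0 τ₀ := ⟨hτ₀.le, le_refl _⟩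
  have hmemτ2 : τ₀ - s₂ ∈ Set.Icc 0 τ₀ := ⟨by linarith, by linarith⟩
  have hA := hconc.2 hmem0 hmem2 (by linarith : (0:ℝ) ≤ 1 - t) ht0 (by ring)
  have hB := hconc.2 hmemτ hmemτ2 (by linarith : (0:ℝ) ≤ 1 - t) ht0 (by ring)
  simp only [smul_eq_mul] at hA hB
  have hxA : (1 - t) * 0 + t * s₂ = s₁ := by rw [hts]; ring
  have hxB : (1 - t) * τ₀ + t * (τ₀ - s₂) = τ₀ - s₁ := by
    have : t * s₂ = s₁ := hts
    nlinarith [hts]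
  rw [hxA, hp0] at hA
  rw [hxB] at hB
  have hA' := mul_le_mul_of_nonneg_right hA hs2.le
  have hB' := mul_le_mul_of_nonneg_right hB hs2.le
  have e1 : ((1 - t) * 0 + t * p s₂) * s₂ = s₁ * p s₂ := by rw [← hts]; ring
  have e2 : ((1 - t) * p τ₀ + t * p (τ₀ - s₂)) * s₂
      = (s₂ - s₁) * p τ₀ + s₁ * p (τ₀ - s₂) := by rw [← hts]; ring
  rw [e1] at hA'
  rw [e2] at hB'
  rw [div_le_div_iff₀ hs2 h1]
  nlinarith [hA', hB']
end

section
/- Let p : ℝ → ℝ satisfy p(0) = 0, p non-decreasing on [0,∞), and p concave on [0,τ]. Let 0 < τ₀ < t̃ ≤ τ and set C₁ := (p(τ₀/3) + p(2τ₀/3) − p(τ₀)) / (τ₀/3). Then for every s ∈ (0, τ₀/3], one has p(s) + p(t̃ − s) − p(t̃) ≥ C₁·s. -/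
/-- Four-point slope inequality for a concave function: if `a ≤ c`, `b ≤ d`,
`a < b`, `c < d`, then the slope over `[c,d]` is at most the slope over `[a,b]`. -/
lemma concave_slope_four {S : Set ℝ} {f : ℝ → ℝ} (hf : ConcaveOn ℝ S f)
    {a b c d : ℝ} (ha : a ∈ S) (hb : b ∈ S) (hc : c ∈ S) (hd : d ∈ S)
    (hab : a < b) (hcd : c < d) (hac : a ≤ c) (hbd : b ≤ d) :
    (f d - f c) / (d - c) ≤ (f b - f a) / (b - a) := by
  have hconv : ConvexOn ℝ S (fun x => -f x) := hf.neg
  have h1 : ((-f b) - (-f a)) / (b - a) ≤ ((-f d) - (-f a)) / (d - a) :=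
    hconv.secant_mono ha hb hd (ne_of_gt hab) (by linarith : d ≠ a) hbd
  have h2 : ((-f a) - (-f d)) / (a - d) ≤ ((-f c) - (-f d)) / (c - d) :=
    hconv.secant_mono hd ha hc (by linarith : a ≠ d) (ne_of_lt hcd) hac
  have hda : (0:ℝ) < d - a := by linarith
  have e : ((-f a) - (-f d)) / (a - d) = ((-f d) - (-f a)) / (d - a) := by
    rw [← neg_div_neg_eq]; ring_nf
  have e2 : ((-f c) - (-f d)) / (c - d) = ((-f d) - (-f c)) / (d - c) := by
    rw [← neg_div_neg_eq]; ring_nf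
  rw [e, e2] at h2
  have h3 : ((-f b) - (-f a)) / (b - a) ≤ ((-f d) - (-f c)) / (d - c) := h1.trans h2
  have hba : (0:ℝ) < b - a := by linarith
  have hdc : (0:ℝ) < d - c := by linarith
  rw [div_le_div_iff₀ hba hdc] at h3
  rw [div_le_div_iff₀ hdc hba]
  nlinarith

/-- Property (iv) in the proof of Lemma 2: with `0 < τ₀ < t̃ ≤ τ` and
`C₁ := (p (τ₀/3) + p (2τ₀/3) − p τ₀)/(τ₀/3)`, for every `s ∈ (0, τ₀/3]`,
`p s + p (t̃ − s) − p t̃ ≥ C₁ · s`. -/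
theorem stmt_6 (p : ℝ → ℝ) (τ τ₀ ttil : ℝ)
    (hp0 : p 0 = 0)
    (hmono : MonotoneOn p (Set.Ici 0))
    (hconc : ConcaveOn ℝ (Set.Icc 0 τ) p)
    (h0 : 0 < τ₀) (h1 : τ₀ < ttil) (h2 : ttil ≤ τ)
    (s : ℝ) (hs0 : 0 < s) (hs : s ≤ τ₀ / 3) :
    ((p (τ₀ / 3) + p (2 * τ₀ / 3) - p τ₀) / (τ₀ / 3)) * s ≤
      p s + p (ttil - s) - p ttil := by
  set a := τ₀ / 3 with ha_def
  have ha : (0:ℝ) < a := by positivity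
  have hτ : (0:ℝ) < τ := lt_of_lt_of_le (h0.trans h1) h2
  -- memberships
  have m0 : (0:ℝ) ∈ Set.Icc 0 τ := ⟨le_refl 0, hτ.le⟩
  have ma : a ∈ Set.Icc 0 τ := ⟨ha.le, by linarith⟩
  have m2a : (2 * τ₀ / 3) ∈ Set.Icc 0 τ := ⟨by linarith, by linarith⟩
  have mτ₀ : τ₀ ∈ Set.Icc 0 τ := ⟨h0.le, by linarith⟩
  have mt : ttil ∈ Set.Icc 0 τ := ⟨by linarith, h2⟩
  have mta : ttil - a ∈ Set.Icc 0 τ := ⟨by rw [ha_def] at *; linarith, by linarith⟩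
  set lam := s / a with hlam_def
  have hlam0 : 0 < lam := by positivity
  have hlam1 : lam ≤ 1 := by rw [div_le_one ha]; exact hs
  have hlamA : lam * a = s := div_mul_cancel₀ s (ne_of_gt ha)
  -- Step A: p s ≥ lam * p a
  have stepA : lam * p a ≤ p s := by
    have := hconc.2 m0 ma (by linarith : (0:ℝ) ≤ 1 - lam) hlam0.le (by ring)
    simpa [hp0, smul_eq_mul, hlamA] using this
  -- Step B: p (ttil - s) ≥ lam * p (ttil - a) + (1 - lam) * p ttil
  have stepB : lam * p (ttil - a) + (1 - lam) * p ttil ≤ p (ttil - s) := by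
    have := hconc.2 mta mt hlam0.le (by linarith : (0:ℝ) ≤ 1 - lam) (by ring)
    have e : lam * (ttil - a) + (1 - lam) * ttil = ttil - s := by
      have : lam * a = s := hlamA
      nlinarith
    simpa [smul_eq_mul, e] using this
  -- Step C: p (ttil) - p (ttil - a) ≤ p τ₀ - p (2τ₀/3)
  have stepC : p ttil - p (ttil - a) ≤ p τ₀ - p (2 * τ₀ / 3) := by
    have h4 := concave_slope_four hconc m2a mτ₀ mta mt
      (by rw [ha_def] at *; linarith) (by linarith)
      (by rw [ha_def] at *; linarith) (by linarith)
    have e1 : τ₀ - 2 * τ₀ / 3 = a := by rw [ha_def]; ring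
    have e2 : ttil - (ttil - a) = a := by ring
    rw [e1, e2, div_le_div_iff_of_pos_right ha] at h4
    linarith
  -- combine
  have key : lam * (p a + p (2 * τ₀ / 3) - p τ₀) ≤ p s + p (ttil - s) - p ttil := by
    have hC : lam * (p (2 * τ₀ / 3) - p τ₀) ≤ lam * (p (ttil - a) - p ttil) :=
      mul_le_mul_of_nonneg_left (by linarith) hlam0.le
    nlinarith [stepA, stepB]
  calc ((p a + p (2 * τ₀ / 3) - p τ₀) / a) * s
      = lam * (p a + p (2 * τ₀ / 3) - p τ₀) := by
        rw [hlam_def]; field_simp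
    _ ≤ _ := key
end

section
/- Let q > 1, let p : ℝ → ℝ satisfy p(0) = 0, p non-decreasing on [0,∞), p concave but not linear on [0,τ₀], p concave on [0,τ], and p twice continuously differentiable on [τ₀, τ], where 0 < τ₀ < τ. Fix τ̂ ∈ (τ₀, τ) and define g_{θ,μ}(t) := p(|t|) + θ·|t|^q + μ·|t − τ̂|^q. Then there exist θ̲ > 0 and μ̲ > 0 such that for all θ ≥ θ̲ and μ ≥ μ̲·θ: g_{θ,μ} has a unique global minimizer t*(θ,μ) over ℝ, this minimizer satisfies t*(θ,μ) ∈ (τ₀, τ), and, writing h(θ,μ) := g_{θ,μ}(t*(θ,μ)) for the minimum value, for every δ ∈ (0, min{t*(θ,μ) − τ₀, τ − t*(θ,μ), 1}) and every t ∈ ℝ, g_{θ,μ}(t) < h(θ,μ) + δ² implies |t − t*(θ,μ)| < δ. -/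
/-- The function `g_{θ,μ}(t) = p |t| + θ·|t|^q + μ·|t − τ̂|^q` from the paper. -/
noncomputable def gfun (p : ℝ → ℝ) (θ μ q tauhat : ℝ) (t : ℝ) : ℝ :=
  p |t| + θ * |t| ^ q + μ * |t - tauhat| ^ q

open Set

/-- `x ↦ |x - c| ^ q` is convex on `ℝ` for `q ≥ 1`. -/
lemma aux_convexOn_abs_rpow (q c : ℝ) (hq : 1 ≤ q) :
    ConvexOn ℝ (Set.univ) (fun x : ℝ => |x - c| ^ q) := by
  refine ⟨convex_univ, ?_⟩
  intro x _ y _ a b ha hb hab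
  have h1 : |a • x + b • y - c| ≤ a * |x - c| + b * |y - c| := by
    have : a • x + b • y - c = a * (x - c) + b * (y - c) := by
      simp only [smul_eq_mul]; linear_combination c*hab
    rw [this]
    calc |a * (x - c) + b * (y - c)| ≤ |a * (x - c)| + |b * (y - c)| := abs_add_le _ _
      _ = a * |x - c| + b * |y - c| := by
          rw [abs_mul, abs_mul, abs_of_nonneg ha, abs_of_nonneg hb]
  have h2 : |a • x + b • y - c| ^ q ≤ (a * |x - c| + b * |y - c|) ^ q :=
    Real.rpow_le_rpow (abs_nonneg _) h1 (by linarith)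
  have h3 := (convexOn_rpow hq).2 (mem_Ici.2 (abs_nonneg (x - c)))
    (mem_Ici.2 (abs_nonneg (y - c))) ha hb hab
  simp only [smul_eq_mul] at h3 ⊢
  exact h2.trans h3

set_option maxHeartbeats 2000000 in
/-- Second and third assertions of Lemma 3 of the paper (`q > 1`): there exist
`θ̲ > 0`, `μ̲ > 0` such that for `θ ≥ θ̲`, `μ ≥ μ̲·θ`, the function `g_{θ,μ}` has a
unique global minimizer `t* ∈ (τ₀, τ)`, and near-minimizers are `δ`-close to `t*`. -/
theorem stmt_8 (q : ℝ) (hq : 1 < q) (p : ℝ → ℝ) (τ₀ τ tauhat : ℝ)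
    (h0 : 0 < τ₀) (hτ : τ₀ < τ) (hhat : tauhat ∈ Set.Ioo τ₀ τ)
    (hp0 : p 0 = 0)
    (hmono : MonotoneOn p (Set.Ici 0))
    (hconc : ConcaveOn ℝ (Set.Icc 0 τ) p)
    (hnotlin : ¬ ∃ c : ℝ, ∀ t ∈ Set.Icc (0 : ℝ) τ₀, p t = c * t)
    (hC2 : ContDiffOn ℝ 2 p (Set.Icc τ₀ τ)) :
    ∃ θlb > (0 : ℝ), ∃ μlb > (0 : ℝ), ∀ θ, θlb ≤ θ → ∀ μ, μlb * θ ≤ μ →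
      ∃ tstar ∈ Set.Ioo τ₀ τ,
        (∀ t : ℝ, gfun p θ μ q tauhat tstar ≤ gfun p θ μ q tauhat t) ∧
        (∀ t' : ℝ, (∀ t : ℝ, gfun p θ μ q tauhat t' ≤ gfun p θ μ q tauhat t) →
          t' = tstar) ∧
        (∀ δ : ℝ, 0 < δ → δ < min (tstar - τ₀) (min (τ - tstar) 1) →
          ∀ t : ℝ, gfun p θ μ q tauhat t < gfun p θ μ q tauhat tstar + δ ^ 2 →
            |t - tstar| < δ) := by
  obtain ⟨hhat1, hhat2⟩ := hhat
  set r : ℝ := min (tauhat - τ₀) (τ - tauhat) / 2 with hr_def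
  have hr : 0 < r := by
    have : 0 < min (tauhat - τ₀) (τ - tauhat) := lt_min (by linarith) (by linarith)
    positivity
  have hra : r < tauhat - τ₀ := by
    have h1 : min (tauhat - τ₀) (τ - tauhat) ≤ tauhat - τ₀ := min_le_left _ _
    have : 0 < min (tauhat - τ₀) (τ - tauhat) := lt_min (by linarith) (by linarith)
    rw [hr_def]; linarith
  have hrb : r < τ - tauhat := by
    have h1 : min (tauhat - τ₀) (τ - tauhat) ≤ τ - tauhat := min_le_right _ _
    have : 0 < min (tauhat - τ₀) (τ - tauhat) := lt_min (by linarith) (by linarith)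
    rw [hr_def]; linarith
  set a : ℝ := tauhat - r with ha_def
  set b : ℝ := tauhat + r with hb_def
  have hτ₀a : τ₀ < a := by rw [ha_def]; linarith
  have hbτ : b < τ := by rw [hb_def]; linarith
  have ha0 : 0 < a := lt_trans h0 hτ₀a
  have hab : a < b := by rw [ha_def, hb_def]; linarith
  set J : Set ℝ := Set.Icc a b with hJ_def
  have hJsub : J ⊆ Set.Icc τ₀ τ := Set.Icc_subset_Icc hτ₀a.le hbτ.le
  have hJIoo : J ⊆ Set.Ioo τ₀ τ := Set.Icc_subset_Ioo hτ₀a hbτ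
  have hhatJ : tauhat ∈ J := ⟨by rw [ha_def]; linarith, by rw [hb_def]; linarith⟩
  -- p is nonnegative on [0, ∞)
  have hpnn : ∀ x : ℝ, 0 ≤ x → 0 ≤ p x := fun x hx => by
    have := hmono (Set.mem_Ici.2 (le_refl (0:ℝ))) (Set.mem_Ici.2 hx) hx
    rwa [hp0] at this
  -- smoothness of p on the open interval U
  set U : Set ℝ := Set.Ioo τ₀ τ with hU_def
  have hUopen : IsOpen U := isOpen_Ioo
  have hpU : ContDiffOn ℝ 2 p U := fun x hx =>
    (hC2.contDiffAt (Icc_mem_nhds hx.1 hx.2)).contDiffWithinAt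
  have hp1U : ContDiffOn ℝ 1 (deriv p) U :=
    hpU.deriv_of_isOpen hUopen (by norm_num)
  have hp1diff : DifferentiableOn ℝ p U := hpU.differentiableOn (by norm_num)
  have hp2cont : ContinuousOn (deriv (deriv p)) U :=
    hp1U.continuousOn_deriv_of_isOpen hUopen (by norm_num)
  -- bound on the second derivative on J
  obtain ⟨K, hK⟩ := (isCompact_Icc (a := a) (b := b)).exists_bound_of_continuousOn
    (hp2cont.mono hJIoo)
  have hK0 : 0 ≤ K := le_trans (norm_nonneg _) (hK tauhat hhatJ)
  -- lower bound on x ^ (q - 2) on J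
  set m : ℝ := min (a ^ (q - 2)) (b ^ (q - 2)) with hm_def
  have hm : 0 < m := lt_min (Real.rpow_pos_of_pos ha0 _)
    (Real.rpow_pos_of_pos (lt_trans ha0 hab) _)
  have hxm : ∀ x ∈ J, m ≤ x ^ (q - 2) := by
    intro x hx
    rcases le_or_gt 2 q with h2 | h2
    · exact le_trans (min_le_left _ _)
        (Real.rpow_le_rpow ha0.le hx.1 (by linarith))
    · exact le_trans (min_le_right _ _)
        (Real.rpow_le_rpow_of_nonpos (lt_of_lt_of_le ha0 hx.1) hx.2 (by linarith))
  -- choice of the thresholds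
  have hqq : 0 < q * (q - 1) * m := by
    have : 0 < q - 1 := by linarith
    positivity
  have hptnn : 0 ≤ p tauhat := hpnn tauhat (by linarith)
  have htauhat0 : 0 < tauhat := lt_trans h0 hhat1
  have hrq : 0 < r ^ q := Real.rpow_pos_of_pos hr q
  have htq : 0 < tauhat ^ q := Real.rpow_pos_of_pos htauhat0 q
  refine ⟨max 1 ((K + 4) / (q * (q - 1) * m)), lt_of_lt_of_le one_pos (le_max_left _ _),
    (p tauhat + tauhat ^ q + 1) / r ^ q, div_pos (by linarith) hrq, ?_⟩
  intro θ hθ μ hμ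
  have hθ1 : 1 ≤ θ := le_trans (le_max_left _ _) hθ
  have hθ0 : 0 < θ := lt_of_lt_of_le one_pos hθ1
  have hμ0 : 0 < μ := lt_of_lt_of_le (mul_pos (div_pos (by linarith) hrq) hθ0) hμ
  have hθK : K + 4 ≤ θ * (q * (q - 1) * m) := by
    have h1 : (K + 4) / (q * (q - 1) * m) ≤ θ := le_trans (le_max_right _ _) hθ
    rwa [div_le_iff₀ hqq] at h1
  have hμkey : p tauhat + θ * tauhat ^ q + θ ≤ μ * r ^ q := by
    have h1 : (p tauhat + tauhat ^ q + 1) / r ^ q * θ * r ^ q ≤ μ * r ^ q :=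
      mul_le_mul_of_nonneg_right hμ hrq.le
    rw [div_mul_eq_mul_div, div_mul_eq_mul_div, mul_div_assoc,
      div_self hrq.ne', mul_one] at h1
    nlinarith
  -- the value of gfun at tauhat
  have hgth : gfun p θ μ q tauhat tauhat = p tauhat + θ * tauhat ^ q := by
    simp [gfun, abs_of_pos htauhat0, Real.zero_rpow (by linarith : q ≠ 0)]
  -- the formula for gfun on J
  have hgJ : ∀ x ∈ J, gfun p θ μ q tauhat x = p x + θ * x ^ q + μ * |x - tauhat| ^ q := by
    intro x hx
    have hx0 : 0 < x := lt_of_lt_of_le ha0 hx.1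
    simp [gfun, abs_of_pos hx0]
  -- KEY 1 : points far from tauhat have large value
  have hfar : ∀ t : ℝ, r ≤ |t - tauhat| → gfun p θ μ q tauhat tauhat + θ ≤ gfun p θ μ q tauhat t := by
    intro t ht
    have h1 : 0 ≤ p |t| := hpnn _ (abs_nonneg t)
    have h2 : 0 ≤ θ * |t| ^ q := mul_nonneg hθ0.le (Real.rpow_nonneg (abs_nonneg t) q)
    have h3 : μ * r ^ q ≤ μ * |t - tauhat| ^ q :=
      mul_le_mul_of_nonneg_left (Real.rpow_le_rpow hr.le ht (by linarith)) hμ0.le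
    rw [hgth]
    simp only [gfun]
    nlinarith
  -- membership in J from distance
  have hmemJ : ∀ t : ℝ, |t - tauhat| ≤ r → t ∈ J := by
    intro t ht
    rw [abs_le] at ht
    exact ⟨by rw [ha_def]; linarith [ht.1], by rw [hb_def]; linarith [ht.2]⟩
  -- continuity of gfun on J
  have hgcont : ContinuousOn (gfun p θ μ q tauhat) J := by
    have h1 : ContinuousOn (fun t : ℝ => p |t|) J := by
      refine (hC2.continuousOn.mono hJsub).comp continuous_abs.continuousOn ?_
      intro x hx
      have hx0 : 0 < x := lt_of_lt_of_le ha0 hx.1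
      rw [abs_of_pos hx0]; exact hx
    have h2 : ContinuousOn (fun t : ℝ => θ * |t| ^ q) J :=
      continuousOn_const.mul (continuous_abs.continuousOn.rpow_const
        (fun x _ => Or.inr (by linarith)))
    have h3 : ContinuousOn (fun t : ℝ => μ * |t - tauhat| ^ q) J :=
      continuousOn_const.mul (((continuous_id.sub continuous_const).abs.continuousOn).rpow_const
        (fun x _ => Or.inr (by linarith)))
    exact (h1.add h2).add h3
  -- existence of a minimizer on J
  obtain ⟨tstar, htsJ, htsmin⟩ := isCompact_Icc.exists_isMinOn ⟨tauhat, hhatJ⟩ hgcont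
  have htsmin' : ∀ t ∈ J, gfun p θ μ q tauhat tstar ≤ gfun p θ μ q tauhat t :=
    fun t ht => htsmin ht
  -- tstar is a global minimizer
  have hglobal : ∀ t : ℝ, gfun p θ μ q tauhat tstar ≤ gfun p θ μ q tauhat t := by
    intro t
    rcases le_or_gt |t - tauhat| r with h | h
    · exact htsmin' t (hmemJ t h)
    · have := hfar t h.le
      have h2 := htsmin' tauhat hhatJ
      linarith
  -- strong convexity of gfun on J
  have hA : ConvexOn ℝ J (fun x : ℝ => p x + θ * x ^ q - 2 * x ^ 2) := by
    refine convexOn_of_hasDerivWithinAt2_nonneg (convex_Icc a b)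
      (f' := fun x => deriv p x + θ * (q * x ^ (q - 1)) - 4 * x)
      (f'' := fun x => deriv (deriv p) x + θ * (q * ((q - 1) * x ^ (q - 2))) - 4)
      ?_ ?_ ?_ ?_
    · refine ContinuousOn.sub (ContinuousOn.add (hC2.continuousOn.mono hJsub) ?_) ?_
      · exact continuousOn_const.mul (continuousOn_id.rpow_const
          (fun x hx => Or.inl (ne_of_gt (lt_of_lt_of_le ha0 hx.1))))
      · exact (continuous_const.mul (continuous_pow 2)).continuousOn
    · intro x hx
      rw [interior_Icc] at hx
      have hxU : x ∈ U := Set.Ioo_subset_Ioo hτ₀a.le hbτ.le hx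
      have hx0 : 0 < x := lt_of_lt_of_le ha0 hx.1.le
      have hd1 : HasDerivAt p (deriv p x) x :=
        ((hp1diff x hxU).differentiableAt (hUopen.mem_nhds hxU)).hasDerivAt
      have hd2 : HasDerivAt (fun y : ℝ => y ^ q) (q * x ^ (q - 1)) x :=
        Real.hasDerivAt_rpow_const (Or.inl hx0.ne')
      have hd3 : HasDerivAt (fun y : ℝ => 2 * y ^ 2) (4 * x) x := by
        have h := (hasDerivAt_pow 2 x).const_mul (2 : ℝ)
        norm_num at h
        exact h.congr_deriv (by ring)
      exact (((hd1.add (hd2.const_mul θ)).sub hd3).hasDerivWithinAt)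
    · intro x hx
      rw [interior_Icc] at hx
      have hxU : x ∈ U := Set.Ioo_subset_Ioo hτ₀a.le hbτ.le hx
      have hx0 : 0 < x := lt_of_lt_of_le ha0 hx.1.le
      have hd1 : HasDerivAt (deriv p) (deriv (deriv p) x) x :=
        (((hp1U.differentiableOn (by norm_num)) x hxU).differentiableAt
          (hUopen.mem_nhds hxU)).hasDerivAt
      have hd2 : HasDerivAt (fun y : ℝ => y ^ (q - 1)) ((q - 1) * x ^ (q - 1 - 1)) x :=
        Real.hasDerivAt_rpow_const (Or.inl hx0.ne')
      have heq : q - 1 - 1 = q - 2 := by ring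
      rw [heq] at hd2
      have hd2' : HasDerivAt (fun y : ℝ => θ * (q * y ^ (q - 1)))
          (θ * (q * ((q - 1) * x ^ (q - 2)))) x := (hd2.const_mul q).const_mul θ
      have hd3 : HasDerivAt (fun y : ℝ => 4 * y) (4 : ℝ) x := by
        simpa using (hasDerivAt_id x).const_mul (4 : ℝ)
      exact (((hd1.add hd2').sub hd3).hasDerivWithinAt)
    · intro x hx
      rw [interior_Icc] at hx
      have hxJ : x ∈ J := Set.Ioo_subset_Icc_self hx
      have h1 : -K ≤ deriv (deriv p) x := by
        have := hK x hxJ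
        rw [Real.norm_eq_abs, abs_le] at this
        linarith [this.1]
      have h2 : θ * (q * (q - 1) * m) ≤ θ * (q * ((q - 1) * x ^ (q - 2)))  := by
        have h3 : q * (q - 1) * m ≤ q * ((q - 1) * x ^ (q - 2)) := by
          have h4 := hxm x hxJ
          have h5 : 0 < q - 1 := by linarith
          nlinarith
        exact mul_le_mul_of_nonneg_left h3 hθ0.le
      linarith
  have hB : ConvexOn ℝ J (fun x : ℝ => μ * |x - tauhat| ^ q) :=
    (((aux_convexOn_abs_rpow q tauhat hq.le).smul hμ0.le).subset
      (Set.subset_univ J) (convex_Icc a b))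
  have hF : ConvexOn ℝ J (fun x : ℝ =>
      (p x + θ * x ^ q - 2 * x ^ 2) + μ * |x - tauhat| ^ q) := hA.add hB
  have hSC : StrongConvexOn J 4 (gfun p θ μ q tauhat) := by
    rw [strongConvexOn_iff_convex]
    refine hF.congr ?_
    intro x hx
    have hx0 : 0 < x := lt_of_lt_of_le ha0 hx.1
    simp only [gfun, abs_of_pos hx0, Real.norm_eq_abs, sq_abs]
    ring
  -- quadratic growth on J
  have hgrowth : ∀ t ∈ J, gfun p θ μ q tauhat tstar + (t - tstar) ^ 2 ≤
      gfun p θ μ q tauhat t := by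
    intro t ht
    have h1 := hSC.2 ht htsJ (show (0:ℝ) ≤ 1/2 by norm_num) (show (0:ℝ) ≤ 1/2 by norm_num)
      (show (1:ℝ)/2 + 1/2 = 1 by norm_num)
    have h2 := hglobal ((1/2 : ℝ) • t + (1/2 : ℝ) • tstar)
    simp only [smul_eq_mul, Real.norm_eq_abs, sq_abs] at h1
    simp only [smul_eq_mul] at h2
    nlinarith [sq_abs (t - tstar)]
  refine ⟨tstar, hJIoo htsJ, hglobal, ?_, ?_⟩
  · -- uniqueness
    intro t' ht'
    rcases le_or_gt |t' - tauhat| r with h | h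
    · have ht'J := hmemJ t' h
      have h1 := hgrowth t' ht'J
      have h2 := ht' tstar
      have h3 : (t' - tstar) ^ 2 ≤ 0 := by linarith
      have h4 : t' - tstar = 0 := by nlinarith [sq_nonneg (t' - tstar)]
      linarith
    · exfalso
      have h1 := hfar t' h.le
      have h2 := ht' tauhat
      linarith
  · -- near minimizers are close
    intro δ hδ hδlt t hgt
    have hδ1 : δ < 1 := lt_of_lt_of_le hδlt (le_trans (min_le_right _ _) (min_le_right _ _))
    rcases le_or_gt |t - tauhat| r with h | h
    · have htJ := hmemJ t h
      have h1 := hgrowth t htJ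
      have h2 : (t - tstar) ^ 2 < δ ^ 2 := by linarith
      exact abs_lt_of_sq_lt_sq h2 hδ.le
    · exfalso
      have h1 := hfar t h.le
      have h2 := htsmin' tauhat hhatJ
      have h3 : δ ^ 2 < 1 := by nlinarith
      linarith
end

section
/- Let q ≥ 1, 0 < τ₀ < τ̂, let p : ℝ → ℝ satisfy p(0) = 0 and p non-decreasing on [0,∞), and let θ̲ > 0. Set μ̲ := (p(τ̂) + θ̲·τ̂^q + 1) / (θ̲·(τ̂ − τ₀)^q). Then for all θ ≥ θ̲ and all μ ≥ μ̲·θ, and every real t ≤ τ₀: g_{θ,μ}(t) ≥ g_{θ,μ}(τ̂) + 1, where g_{θ,μ}(t) := p(|t|) + θ·|t|^q + μ·|t − τ̂|^q. -/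
/-- Inequality (Eq:Lem8_1) from the proof of Lemma 3: with
`μ̲ := (p τ̂ + θ̲·τ̂^q + 1)/(θ̲·(τ̂ − τ₀)^q)`, for all `θ ≥ θ̲`, `μ ≥ μ̲·θ` and all
`t ≤ τ₀`, one has `g_{θ,μ}(t) ≥ g_{θ,μ}(τ̂) + 1`. -/
theorem stmt_9 (q : ℝ) (hq : 1 ≤ q) (τ₀ tauhat : ℝ)
    (h0 : 0 < τ₀) (h1 : τ₀ < tauhat)
    (p : ℝ → ℝ) (hp0 : p 0 = 0)
    (hmono : MonotoneOn p (Set.Ici 0))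
    (θlb : ℝ) (hθlb : 0 < θlb)
    (θ μ : ℝ) (hθ : θlb ≤ θ)
    (hμ : ((p tauhat + θlb * tauhat ^ q + 1) / (θlb * (tauhat - τ₀) ^ q)) * θ ≤ μ)
    (t : ℝ) (ht : t ≤ τ₀) :
    gfun p θ μ q tauhat tauhat + 1 ≤ gfun p θ μ q tauhat t := by
  have hτpos : 0 < tauhat := h0.trans h1
  have hθpos : 0 < θ := hθlb.trans_le hθ
  have hgap : (0:ℝ) < tauhat - τ₀ := by linarith
  have hgapq : (0:ℝ) < (tauhat - τ₀) ^ q := Real.rpow_pos_of_pos hgap q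
  have hpτ : 0 ≤ p tauhat := by
    have := hmono (Set.mem_Ici.mpr le_rfl) (Set.mem_Ici.mpr hτpos.le) hτpos.le
    linarith [hp0 ▸ this]
  have hτq : 0 ≤ tauhat ^ q := Real.rpow_nonneg hτpos.le q
  have hD : 0 < θlb * (tauhat - τ₀) ^ q := mul_pos hθlb hgapq
  -- key inequality
  have hμ' : ((p tauhat + θlb * tauhat ^ q + 1) / (θlb * (tauhat - τ₀) ^ q)) * θ
      * (tauhat - τ₀) ^ q ≤ μ * (tauhat - τ₀) ^ q :=
    mul_le_mul_of_nonneg_right hμ hgapq.le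
  have heq : ((p tauhat + θlb * tauhat ^ q + 1) / (θlb * (tauhat - τ₀) ^ q)) * θ
      * (tauhat - τ₀) ^ q = (p tauhat + θlb * tauhat ^ q + 1) * θ / θlb := by
    field_simp
  rw [heq] at hμ'
  have key : p tauhat + θ * tauhat ^ q + 1 ≤ μ * (tauhat - τ₀) ^ q := by
    have h2 : (p tauhat + θ * tauhat ^ q + 1) * θlb
        ≤ (p tauhat + θlb * tauhat ^ q + 1) * θ := by nlinarith
    have h3 : p tauhat + θ * tauhat ^ q + 1
        ≤ (p tauhat + θlb * tauhat ^ q + 1) * θ / θlb := by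
      rw [le_div_iff₀ hθlb]; linarith
    linarith
  -- evaluate gfun at tauhat
  have habs : |tauhat| = tauhat := abs_of_pos hτpos
  have hzero : |tauhat - tauhat| ^ q = 0 := by
    rw [sub_self, abs_zero, Real.zero_rpow (by linarith : q ≠ 0)]
  have hgτ : gfun p θ μ q tauhat tauhat = p tauhat + θ * tauhat ^ q := by
    unfold gfun; rw [habs, hzero]; ring
  -- lower bound gfun at t
  have hpt : 0 ≤ p |t| := by
    have := hmono (Set.mem_Ici.mpr le_rfl) (Set.mem_Ici.mpr (abs_nonneg t)) (abs_nonneg t)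
    linarith [hp0 ▸ this]
  have htq : 0 ≤ θ * |t| ^ q :=
    mul_nonneg hθpos.le (Real.rpow_nonneg (abs_nonneg t) q)
  have htabs : |t - tauhat| = tauhat - t := by
    rw [abs_sub_comm, abs_of_pos (by linarith)]
  have hdist : (tauhat - τ₀) ^ q ≤ |t - tauhat| ^ q := by
    rw [htabs]
    exact Real.rpow_le_rpow hgap.le (by linarith) (by linarith)
  have hμ0 : 0 ≤ μ := le_trans (by positivity) hμ
  have hlast : μ * (tauhat - τ₀) ^ q ≤ μ * |t - tauhat| ^ q :=
    mul_le_mul_of_nonneg_left hdist hμ0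
  have : gfun p θ μ q tauhat t ≥ μ * (tauhat - τ₀) ^ q := by
    simp only [gfun]; linarith
  rw [hgτ]
  linarith
end

section
/- Let q ≥ 1, let p : ℝ → ℝ satisfy p(0) = 0, p non-decreasing on [0,∞), and p concave on [0,τ] for some τ > 0, and fix τ̂ ∈ (0, τ) and θ, μ ≥ 0. Define g_{θ,μ}(t) := p(|t|) + θ·|t|^q + μ·|t − τ̂|^q and let h := inf_{t ∈ ℝ} g_{θ,μ}(t). Then for every integer l ≥ 2 and all reals t_1, …, t_l: p(|t_1|) + ⋯ + p(|t_l|) + θ·|t_1 + ⋯ + t_l|^q + μ·|t_1 + ⋯ + t_l − τ̂|^q ≥ h. -/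
/-- Concavity with `p 0 = 0` gives `(x/c) * p c ≤ p x` for `0 ≤ x ≤ c ≤ τ`. -/
lemma aux_concave_frac (p : ℝ → ℝ) (τ : ℝ) (hp0 : p 0 = 0)
    (hconc : ConcaveOn ℝ (Set.Icc 0 τ) p) (c x : ℝ) (hc0 : 0 < c) (hcτ : c ≤ τ)
    (hx0 : 0 ≤ x) (hxc : x ≤ c) : (x / c) * p c ≤ p x := by
  have h0 : (0:ℝ) ∈ Set.Icc 0 τ := ⟨le_refl 0, hc0.le.trans hcτ⟩
  have hc : c ∈ Set.Icc 0 τ := ⟨hc0.le, hcτ⟩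
  have ha : (0:ℝ) ≤ 1 - x / c := by
    have : x / c ≤ 1 := (div_le_one hc0).2 hxc
    linarith
  have hb : (0:ℝ) ≤ x / c := div_nonneg hx0 hc0.le
  have hab : (1 - x / c) + x / c = 1 := by ring
  have := hconc.2 h0 hc ha hb hab
  have hx' : (1 - x / c) • (0:ℝ) + (x / c) • c = x := by
    rw [smul_zero, zero_add, smul_eq_mul, div_mul_cancel₀ x hc0.ne']
  rw [hx'] at this
  simpa [hp0] using this

/-- Key subadditivity-type estimate: `p (min |∑ t| τ̂) ≤ ∑ p |tᵢ|`. -/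
lemma aux_key (p : ℝ → ℝ) (τ tauhat : ℝ) (hhat : tauhat ∈ Set.Ioo 0 τ)
    (hp0 : p 0 = 0) (hmono : MonotoneOn p (Set.Ici 0))
    (hconc : ConcaveOn ℝ (Set.Icc 0 τ) p)
    (l : ℕ) (hl : 2 ≤ l) (t : Fin l → ℝ) :
    p (min |∑ i, t i| tauhat) ≤ ∑ i, p |t i| := by
  set s := ∑ i, t i with hs
  set c := min |s| tauhat with hc
  have hc0 : 0 ≤ c := le_min (abs_nonneg _) hhat.1.le
  have hcτ : c ≤ τ := (min_le_right _ _).trans hhat.2.le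
  have hpnn : ∀ i, 0 ≤ p |t i| := fun i => by
    have := hmono (Set.mem_Ici.2 (le_refl 0)) (Set.mem_Ici.2 (abs_nonneg (t i))) (abs_nonneg (t i))
    simpa [hp0] using this
  by_cases hex : ∃ i, c ≤ |t i|
  · obtain ⟨i, hi⟩ := hex
    have h1 : p c ≤ p |t i| :=
      hmono (Set.mem_Ici.2 hc0) (Set.mem_Ici.2 (abs_nonneg _)) hi
    have h2 : p |t i| ≤ ∑ j, p |t j| :=
      Finset.single_le_sum (fun j _ => hpnn j) (Finset.mem_univ i)
    exact h1.trans h2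
  · push_neg at hex
    -- all |t i| < c, so c > 0
    have hne : Nonempty (Fin l) := ⟨⟨0, by omega⟩⟩
    obtain ⟨i0⟩ := hne
    have hcpos : 0 < c := (abs_nonneg (t i0)).trans_lt (hex i0)
    have hsum_abs : |s| ≤ ∑ i, |t i| := Finset.abs_sum_le_sum_abs _ _
    have hcs : c ≤ |s| := min_le_left _ _
    have hpc_nn : 0 ≤ p c := by
      have := hmono (Set.mem_Ici.2 (le_refl 0)) (Set.mem_Ici.2 hc0) hc0
      simpa [hp0] using this
    have hstep : ∀ i, (|t i| / c) * p c ≤ p |t i| := fun i =>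
      aux_concave_frac p τ hp0 hconc c |t i| hcpos hcτ (abs_nonneg _) (hex i).le
    have hsum : ∑ i, (|t i| / c) * p c ≤ ∑ i, p |t i| :=
      Finset.sum_le_sum (fun i _ => hstep i)
    have hrw : ∑ i, (|t i| / c) * p c = ((∑ i, |t i|) / c) * p c := by
      rw [Finset.sum_div, Finset.sum_mul]
    have h1 : p c ≤ ((∑ i, |t i|) / c) * p c := by
      have : (1:ℝ) ≤ (∑ i, |t i|) / c := by
        rw [le_div_iff₀ hcpos]
        linarith
      nlinarith
    calc p c ≤ ((∑ i, |t i|) / c) * p c := h1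
      _ = ∑ i, (|t i| / c) * p c := hrw.symm
      _ ≤ ∑ i, p |t i| := hsum

/-- First assertion of Lemma 5 of the paper: with `h := ⨅ t, g_{θ,μ}(t)`, for every
`l ≥ 2` and reals `t₁, …, t_l`,
`p |t₁| + ⋯ + p |t_l| + θ·|∑ t_j|^q + μ·|∑ t_j − τ̂|^q ≥ h`. -/
theorem stmt_13 (q : ℝ) (hq : 1 ≤ q) (p : ℝ → ℝ) (τ tauhat : ℝ)
    (hτ : 0 < τ) (hhat : tauhat ∈ Set.Ioo 0 τ)
    (hp0 : p 0 = 0)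
    (hmono : MonotoneOn p (Set.Ici 0))
    (hconc : ConcaveOn ℝ (Set.Icc 0 τ) p)
    (θ μ : ℝ) (hθ : 0 ≤ θ) (hμ : 0 ≤ μ)
    (l : ℕ) (hl : 2 ≤ l) (t : Fin l → ℝ) :
    (⨅ s : ℝ, gfun p θ μ q tauhat s) ≤
      ∑ i, p |t i| + θ * |∑ i, t i| ^ q + μ * |∑ i, t i - tauhat| ^ q := by
  set s := ∑ i, t i with hs
  set c := min |s| tauhat with hc
  have hc0 : 0 ≤ c := le_min (abs_nonneg _) hhat.1.le
  set u : ℝ := if s < 0 then -c else c with hu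
  have hq0 : 0 ≤ q := le_trans zero_le_one hq
  have habsu : |u| = c := by
    rw [hu]; split <;> simp [abs_of_nonneg hc0]
  have hus : |u| ≤ |s| := by rw [habsu]; exact min_le_left _ _
  have hutau : |u - tauhat| ≤ |s - tauhat| := by
    rcases lt_or_ge s 0 with hneg | hpos
    · simp only [hu, if_pos hneg]
      have h1 : |s - tauhat| = tauhat - s := by
        rw [abs_of_nonpos]; ring_nf; linarith [hhat.1]
      have h2 : |(-c) - tauhat| = c + tauhat := by
        rw [abs_of_nonpos] <;> [ring; linarith [hhat.1]]
      rw [h1, h2]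
      have : c ≤ |s| := min_le_left _ _
      rw [abs_of_neg hneg] at this
      linarith
    · simp only [hu, if_neg (not_lt.2 hpos)]
      rcases le_total s tauhat with h | h
      · have hcs : c = s := by
          rw [hc, abs_of_nonneg hpos, min_eq_left h]
        rw [hcs]
      · have hcs : c = tauhat := by
          rw [hc, abs_of_nonneg hpos, min_eq_right h]
        rw [hcs]
        simp only [sub_self, abs_zero]
        exact abs_nonneg _
  -- bound each piece
  have hkey : p |u| ≤ ∑ i, p |t i| := by
    rw [habsu]
    exact aux_key p τ tauhat hhat hp0 hmono hconc l hl t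
  have hθterm : θ * |u| ^ q ≤ θ * |s| ^ q :=
    mul_le_mul_of_nonneg_left (Real.rpow_le_rpow (abs_nonneg _) hus hq0) hθ
  have hμterm : μ * |u - tauhat| ^ q ≤ μ * |s - tauhat| ^ q :=
    mul_le_mul_of_nonneg_left (Real.rpow_le_rpow (abs_nonneg _) hutau hq0) hμ
  have hg : gfun p θ μ q tauhat u ≤ ∑ i, p |t i| + θ * |s| ^ q + μ * |s - tauhat| ^ q := by
    unfold gfun
    linarith
  refine le_trans (ciInf_le ?_ u) hg
  refine ⟨0, ?_⟩
  rintro y ⟨x, rfl⟩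
  simp only [gfun]
  have h1 : 0 ≤ p |x| := by
    have := hmono (Set.mem_Ici.2 (le_refl 0)) (Set.mem_Ici.2 (abs_nonneg x)) (abs_nonneg x)
    simpa [hp0] using this
  have h2 : 0 ≤ θ * |x| ^ q := mul_nonneg hθ (Real.rpow_nonneg (abs_nonneg _) q)
  have h3 : 0 ≤ μ * |x - tauhat| ^ q := mul_nonneg hμ (Real.rpow_nonneg (abs_nonneg _) q)
  linarith
end

section
/- Let q ≥ 1, 0 < τ₀ < τ̂ < τ, let p : ℝ → ℝ satisfy p(0) = 0, p non-decreasing on [0,∞), p concave on [0,τ], and p not linear on [0,τ₀]. Set C₁ := (p(τ₀/3) + p(2τ₀/3) − p(τ₀)) / (τ₀/3). Let θ, μ ≥ 0 and define g_{θ,μ}(t) := p(|t|) + θ·|t|^q + μ·|t − τ̂|^q. Assume g_{θ,μ} has a unique global minimizer t* ∈ (τ₀, τ) over ℝ with minimum value h := g_{θ,μ}(t*), and assume that for every δ ∈ (0, min{t* − τ₀, τ − t*, 1}) and every t ∈ ℝ, g_{θ,μ}(t) < h + δ² implies |t − t*| < δ. Let δ̄ := min{ τ₀/3, (t* − τ₀)/2,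 (τ − t*)/2, 1, C₁ }. Then for every δ ∈ (0, δ̄), every integer l ≥ 2, and all reals t_1, …, t_l: if p(|t_1|) + ⋯ + p(|t_l|) + θ·|t_1 + ⋯ + t_l|^q + μ·|t_1 + ⋯ + t_l − τ̂|^q < h + δ², then there exists an index i such that |t_i − t*| < 2δ and |t_j| ≤ δ for all j ≠ i. -/
section Aux
variable {p : ℝ → ℝ} {τ : ℝ}

/-- Four point concavity inequality. -/
lemma fourpt (hconc : ConcaveOn ℝ (Set.Icc 0 τ) p) {a b d : ℝ}
    (ha : 0 ≤ a) (hab : a ≤ b) (hd : 0 ≤ d) (hbd : b + d ≤ τ) :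
    p a + p (b + d) ≤ p (a + d) + p b := by
  rcases eq_or_lt_of_le (show a ≤ b + d by linarith) with heq | hlt
  · have hd0 : d = 0 := by linarith
    have hab' : a = b := by linarith
    subst hd0; subst hab'; simp
  · have hL : 0 < b + d - a := by linarith
    have hmem1 : (b + d) ∈ Set.Icc (0:ℝ) τ := ⟨by linarith, hbd⟩
    have hmem2 : a ∈ Set.Icc (0:ℝ) τ := ⟨ha, by linarith⟩
    have w1 : (0:ℝ) ≤ d / (b + d - a) := div_nonneg hd hL.le
    have w2 : (0:ℝ) ≤ (b - a) / (b + d - a) := div_nonneg (by linarith) hL.le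
    have wsum : d / (b + d - a) + (b - a) / (b + d - a) = 1 := by field_simp; ring
    have h1 := hconc.2 hmem1 hmem2 w1 w2 wsum
    have h2 := hconc.2 hmem1 hmem2 w2 w1 (by linarith)
    simp only [smul_eq_mul] at h1 h2
    have e1 : d / (b + d - a) * (b + d) + (b - a) / (b + d - a) * a = a + d := by
      field_simp; ring
    have e2 : (b - a) / (b + d - a) * (b + d) + d / (b + d - a) * a = b := by
      field_simp; ring
    rw [e1] at h1; rw [e2] at h2
    have e3 : d / (b + d - a) * p (b + d) + (b - a) / (b + d - a) * p (b + d) = p (b + d) := by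
      rw [← add_mul, wsum, one_mul]
    have e4 : d / (b + d - a) * p a + (b - a) / (b + d - a) * p a = p a := by
      rw [← add_mul, wsum, one_mul]
    linarith

lemma subadd2 (hp0 : p 0 = 0) (hconc : ConcaveOn ℝ (Set.Icc 0 τ) p)
    {x y : ℝ} (hx : 0 ≤ x) (hy : 0 ≤ y) (hxy : x + y ≤ τ) :
    p (x + y) ≤ p x + p y := by
  have := fourpt hconc (le_refl (0:ℝ)) hy hx (by linarith)
  rw [zero_add] at this
  rw [hp0, add_comm y x] at this
  linarith

lemma pmin_step (hp0 : p 0 = 0) (hmono : MonotoneOn p (Set.Ici 0))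
    (hconc : ConcaveOn ℝ (Set.Icc 0 τ) p) (hτ : 0 ≤ τ)
    {s a : ℝ} (hs : 0 ≤ s) (ha : 0 ≤ a) :
    p (min (s + a) τ) ≤ p (min s τ) + p a := by
  rcases le_or_gt (s + a) τ with h | h
  · rw [min_eq_left h, min_eq_left (by linarith)]
    exact subadd2 hp0 hconc hs ha h
  · rw [min_eq_right h.le]
    rcases le_or_gt τ s with h2 | h2
    · rw [min_eq_right h2]
      have : p 0 ≤ p a := hmono (Set.mem_Ici.mpr le_rfl) (Set.mem_Ici.mpr ha) ha
      linarith [hp0]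
    · rw [min_eq_left h2.le]
      have h3 : p (s + (τ - s)) ≤ p s + p (τ - s) :=
        subadd2 hp0 hconc hs (by linarith) (by linarith)
      have h4 : p (τ - s) ≤ p a :=
        hmono (Set.mem_Ici.mpr (by linarith)) (Set.mem_Ici.mpr ha) (by linarith)
      have : s + (τ - s) = τ := by ring
      rw [this] at h3
      linarith

lemma pmin_sum {ι : Type*} (hp0 : p 0 = 0) (hmono : MonotoneOn p (Set.Ici 0))
    (hconc : ConcaveOn ℝ (Set.Icc 0 τ) p) (hτ : 0 ≤ τ)
    (T : Finset ι) (f : ι → ℝ) (hf : ∀ k, 0 ≤ f k) :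
    p (min (∑ k ∈ T, f k) τ) ≤ ∑ k ∈ T, p (f k) := by
  induction T using Finset.cons_induction with
  | empty => simp [min_eq_left hτ, hp0]
  | cons a s hne ih =>
    rw [Finset.sum_cons, Finset.sum_cons]
    have hs0 : 0 ≤ ∑ k ∈ s, f k := Finset.sum_nonneg fun k _ => hf k
    have e : f a + ∑ k ∈ s, f k = (∑ k ∈ s, f k) + f a := by ring
    rw [e]
    calc p (min ((∑ k ∈ s, f k) + f a) τ) ≤ p (min (∑ k ∈ s, f k) τ) + p (f a) :=
          pmin_step hp0 hmono hconc hτ hs0 (hf a)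
      _ ≤ (∑ k ∈ s, p (f k)) + p (f a) := by linarith [ih]
      _ = p (f a) + ∑ k ∈ s, p (f k) := by ring

lemma exists_chunk {ι : Type*} (δ : ℝ) (hδ : 0 < δ) (f : ι → ℝ) :
    ∀ s : Finset ι, (∀ k ∈ s, 0 ≤ f k ∧ f k < δ) → δ ≤ ∑ k ∈ s, f k →
      ∃ T ⊆ s, δ ≤ ∑ k ∈ T, f k ∧ ∑ k ∈ T, f k < 2 * δ := by
  intro s
  induction s using Finset.cons_induction with
  | empty => intro _ hsum; simp at hsum; linarith
  | cons a s hne ih =>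
    intro hf hsum
    rcases le_or_gt δ (∑ k ∈ s, f k) with h | h
    · obtain ⟨T, hT, h1, h2⟩ := ih (fun k hk => hf k (Finset.mem_cons_of_mem hk)) h
      exact ⟨T, hT.trans (Finset.subset_cons _), h1, h2⟩
    · refine ⟨Finset.cons a s hne, Finset.Subset.refl _, hsum, ?_⟩
      rw [Finset.sum_cons]
      have := (hf a (Finset.mem_cons_self a s)).2
      linarith

lemma clamp_lip (τ x y : ℝ) :
    |max (-τ) (min x τ) - max (-τ) (min y τ)| ≤ |x - y| :=
  calc |max (-τ) (min x τ) - max (-τ) (min y τ)|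
      ≤ max |(-τ) - (-τ)| |min x τ - min y τ| := abs_max_sub_max_le_max _ _ _ _
    _ = |min x τ - min y τ| := by simp
    _ ≤ max |x - y| |τ - τ| := abs_min_sub_min_le_max _ _ _ _
    _ = |x - y| := by simp [abs_nonneg]

end Aux

/-- Second ('only if') assertion of Lemma 5 of the paper: assuming `g_{θ,μ}` has a
unique global minimizer `t* ∈ (τ₀, τ)` with value `h = g_{θ,μ}(t*)` satisfying the
localization property, for `δ ∈ (0, δ̄)` with
`δ̄ = min {τ₀/3, (t*−τ₀)/2, (τ−t*)/2, 1, C₁}`, if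
`∑ p |t_j| + θ·|∑ t_j|^q + μ·|∑ t_j − τ̂|^q < h + δ²`, then some `t_i` is `2δ`-close to
`t*` while all other `t_j` satisfy `|t_j| ≤ δ`. -/
theorem stmt_14 (q : ℝ) (hq : 1 ≤ q) (p : ℝ → ℝ) (τ₀ τ tauhat : ℝ)
    (h0 : 0 < τ₀) (h1 : τ₀ < tauhat) (h2 : tauhat < τ)
    (hp0 : p 0 = 0)
    (hmono : MonotoneOn p (Set.Ici 0))
    (hconc : ConcaveOn ℝ (Set.Icc 0 τ) p)
    (hnotlin : ¬ ∃ c : ℝ, ∀ t ∈ Set.Icc (0 : ℝ) τ₀, p t = c * t)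
    (θ μ : ℝ) (hθ : 0 ≤ θ) (hμ : 0 ≤ μ)
    (tstar : ℝ) (htstar : tstar ∈ Set.Ioo τ₀ τ)
    (hmin : ∀ t : ℝ, gfun p θ μ q tauhat tstar ≤ gfun p θ μ q tauhat t)
    (huniq : ∀ t' : ℝ, (∀ t : ℝ, gfun p θ μ q tauhat t' ≤ gfun p θ μ q tauhat t) →
      t' = tstar)
    (hloc : ∀ δ : ℝ, 0 < δ → δ < min (tstar - τ₀) (min (τ - tstar) 1) →
      ∀ t : ℝ, gfun p θ μ q tauhat t < gfun p θ μ q tauhat tstar + δ ^ 2 →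
        |t - tstar| < δ)
    (δ : ℝ) (hδ0 : 0 < δ)
    (hδ : δ < min (τ₀ / 3) (min ((tstar - τ₀) / 2) (min ((τ - tstar) / 2)
      (min 1 ((p (τ₀ / 3) + p (2 * τ₀ / 3) - p τ₀) / (τ₀ / 3))))))
    (l : ℕ) (hl : 2 ≤ l) (t : Fin l → ℝ)
    (hlt : ∑ i, p |t i| + θ * |∑ i, t i| ^ q + μ * |∑ i, t i - tauhat| ^ q <
      gfun p θ μ q tauhat tstar + δ ^ 2) :
    ∃ i, |t i - tstar| < 2 * δ ∧ ∀ j, j ≠ i → |t j| ≤ δ := by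
  obtain ⟨ht1, ht2⟩ := htstar
  simp only [lt_min_iff] at hδ
  obtain ⟨hd1, hd2, hd3, hd4, hd5⟩ := hδ
  have hτpos : 0 < τ := lt_trans (lt_trans h0 h1) h2
  have expand : ∀ u : ℝ, gfun p θ μ q tauhat u
      = p |u| + θ * |u| ^ q + μ * |u - tauhat| ^ q := fun u => rfl
  set S := ∑ i, t i with hSdef
  set A := ∑ i, |t i| with hAdef
  have hSA : |S| ≤ A := Finset.abs_sum_le_sum_abs _ _
  have hA0 : 0 ≤ A := Finset.sum_nonneg fun k _ => abs_nonneg _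
  have psum : p (min A τ) ≤ ∑ i, p |t i| :=
    pmin_sum hp0 hmono hconc hτpos.le _ _ (fun k => abs_nonneg _)
  -- the clamped sum
  set s₀ := max (-τ) (min S τ) with hs₀def
  have e0 : max (-τ) (min (0:ℝ) τ) = 0 := by
    rw [min_eq_left hτpos.le, max_eq_right (by linarith : -τ ≤ (0:ℝ))]
  have habs0 : |s₀| ≤ |S| := by
    have := clamp_lip τ S 0
    rw [e0, sub_zero, sub_zero] at this
    exact this
  have habsτ : |s₀| ≤ τ :=
    abs_le.mpr ⟨le_max_left _ _, max_le (by linarith) (min_le_right _ _)⟩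
  have hgs₀ : gfun p θ μ q tauhat s₀ < gfun p θ μ q tauhat tstar + δ ^ 2 := by
    rw [expand s₀]
    have hp1 : p |s₀| ≤ p (min A τ) :=
      hmono (Set.mem_Ici.mpr (abs_nonneg _))
        (Set.mem_Ici.mpr (le_min hA0 hτpos.le))
        (le_min (habs0.trans hSA) habsτ)
    have hp2 : θ * |s₀| ^ q ≤ θ * |S| ^ q :=
      mul_le_mul_of_nonneg_left
        (Real.rpow_le_rpow (abs_nonneg _) habs0 (by linarith)) hθ
    have hclτ : |s₀ - tauhat| ≤ |S - tauhat| := by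
      have e1 : max (-τ) (min tauhat τ) = tauhat := by
        rw [min_eq_left h2.le, max_eq_right (by linarith : -τ ≤ tauhat)]
      have := clamp_lip τ S tauhat
      rwa [e1] at this
    have hp3 : μ * |s₀ - tauhat| ^ q ≤ μ * |S - tauhat| ^ q :=
      mul_le_mul_of_nonneg_left
        (Real.rpow_le_rpow (abs_nonneg _) hclτ (by linarith)) hμ
    linarith [hlt, psum]
  have hs₀close : |s₀ - tstar| < δ :=
    hloc δ hδ0 (lt_min (by linarith) (lt_min (by linarith) hd4)) s₀ hgs₀
  obtain ⟨hc1', hc2'⟩ := abs_lt.mp hs₀close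
  have hSτlt : S < τ := by
    by_contra hc
    push_neg at hc
    have : s₀ = τ := by
      rw [hs₀def, min_eq_right hc, max_eq_right (by linarith : -τ ≤ τ)]
    rw [this] at hc2'
    linarith
  have hSτgt : -τ < S := by
    by_contra hc
    push_neg at hc
    have : s₀ = -τ := by
      rw [hs₀def, min_eq_left (by linarith : S ≤ τ),
        max_eq_left (by linarith : S ≤ -τ)]
    rw [this] at hc1'
    linarith
  have hSeq : s₀ = S := by
    rw [hs₀def, min_eq_left hSτlt.le, max_eq_right hSτgt.le]
  rw [hSeq] at hc1' hc2'
  have hSgt : τ₀ + δ < S := by linarith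
  have hSlt : S < τ - δ := by linarith
  have hSpos : 0 < S := by linarith
  -- main inequality: sum of p-values is close to p S
  have hmainlt : ∑ i, p |t i| < p S + δ ^ 2 := by
    have hgS := hmin S
    rw [expand S] at hgS
    rw [show p |S| = p S from by rw [abs_of_pos hSpos]] at hgS
    linarith [hlt]
  -- choose the max index
  have hne : (Finset.univ : Finset (Fin l)).Nonempty :=
    ⟨⟨0, by omega⟩, Finset.mem_univ _⟩
  obtain ⟨i, -, hi⟩ := Finset.exists_max_image Finset.univ (fun k => |t k|) hne
  set v := ∑ j ∈ Finset.univ.erase i, |t j| with hvdef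
  have hv0 : 0 ≤ v := Finset.sum_nonneg fun k _ => abs_nonneg _
  have hsplitA : |t i| + v = A := Finset.add_sum_erase _ (fun j => |t j|) (Finset.mem_univ i)
  rcases le_or_gt v δ with hvle | hvgt
  · refine ⟨i, ?_, ?_⟩
    · have htS : t i + ∑ j ∈ Finset.univ.erase i, t j = S :=
        Finset.add_sum_erase _ t (Finset.mem_univ i)
      have habsr : |∑ j ∈ Finset.univ.erase i, t j| ≤ v :=
        Finset.abs_sum_le_sum_abs _ _
      have e : t i - tstar = (S - tstar) - ∑ j ∈ Finset.univ.erase i, t j := by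
        linarith
      rw [e]
      have tri : |(S - tstar) - ∑ j ∈ Finset.univ.erase i, t j|
          ≤ |S - tstar| + |∑ j ∈ Finset.univ.erase i, t j| := by
        calc |(S - tstar) - ∑ j ∈ Finset.univ.erase i, t j|
            = |(S - tstar) + (-(∑ j ∈ Finset.univ.erase i, t j))| := by
              rw [sub_eq_add_neg]
          _ ≤ |S - tstar| + |-(∑ j ∈ Finset.univ.erase i, t j)| := abs_add_le _ _
          _ = |S - tstar| + |∑ j ∈ Finset.univ.erase i, t j| := by rw [abs_neg]
      have hSc : |S - tstar| < δ := abs_lt.mpr ⟨by linarith, by linarith⟩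
      linarith
    · intro j hj
      have hjmem : j ∈ Finset.univ.erase i :=
        Finset.mem_erase.mpr ⟨hj, Finset.mem_univ _⟩
      have := Finset.single_le_sum (f := fun k => |t k|)
        (fun k _ => abs_nonneg _) hjmem
      linarith
  · exfalso
    have hA_ge : τ₀ + δ ≤ A := le_trans (by linarith) (le_trans (le_abs_self S) hSA)
    obtain ⟨T, hTsub, hT1, hT2⟩ : ∃ T ⊆ (Finset.univ : Finset (Fin l)),
        δ ≤ ∑ k ∈ T, |t k| ∧ δ ≤ ∑ k ∈ Finset.univ \ T, |t k| := by
      rcases le_or_gt δ |t i| with hti | hti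
      · refine ⟨{i}, Finset.subset_univ _, by simpa using hti, ?_⟩
        rw [Finset.sdiff_singleton_eq_erase]
        exact hvgt.le
      · have hall : ∀ k ∈ (Finset.univ : Finset (Fin l)), 0 ≤ |t k| ∧ |t k| < δ :=
          fun k _ => ⟨abs_nonneg _, lt_of_le_of_lt (hi k (Finset.mem_univ k)) hti⟩
        obtain ⟨T, hTs, hh1, hh2⟩ := exists_chunk δ hδ0 (fun k => |t k|)
          Finset.univ hall (by linarith : δ ≤ A)
        refine ⟨T, hTs, hh1, ?_⟩
        have e : ∑ k ∈ Finset.univ \ T, |t k| = A - ∑ k ∈ T, |t k| := by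
          rw [eq_sub_iff_add_eq, Finset.sum_sdiff hTs]
        rw [e]
        linarith
    set v₁ := ∑ k ∈ T, |t k| with hv₁def
    set v₂ := ∑ k ∈ Finset.univ \ T, |t k| with hv₂def
    have hv₁0 : 0 ≤ v₁ := Finset.sum_nonneg fun k _ => abs_nonneg _
    have hv₂0 : 0 ≤ v₂ := Finset.sum_nonneg fun k _ => abs_nonneg _
    have hsplit : v₂ + v₁ = A := Finset.sum_sdiff hTsub
    have hpv₁ : p (min v₁ τ) ≤ ∑ k ∈ T, p |t k| :=
      pmin_sum hp0 hmono hconc hτpos.le _ _ (fun k => abs_nonneg _)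
    have hpv₂ : p (min v₂ τ) ≤ ∑ k ∈ Finset.univ \ T, p |t k| :=
      pmin_sum hp0 hmono hconc hτpos.le _ _ (fun k => abs_nonneg _)
    have hsum_eq : (∑ k ∈ Finset.univ \ T, p |t k|) + ∑ k ∈ T, p |t k|
        = ∑ i, p |t i| := Finset.sum_sdiff hTsub
    set a := min v₁ τ with hadef
    set b := min v₂ τ with hbdef
    have haδ : δ ≤ a := le_min hT1 (by linarith)
    have hbδ : δ ≤ b := le_min hT2 (by linarith)
    have hab : S ≤ a + b := by
      rcases le_total v₁ τ with ha1 | ha1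
      · rcases le_total v₂ τ with ha2 | ha2
        · rw [hadef, hbdef, min_eq_left ha1, min_eq_left ha2]
          have : S ≤ A := le_trans (le_abs_self S) hSA
          linarith
        · rw [hbdef, min_eq_right ha2]
          linarith
      · rw [hadef, min_eq_right ha1]
        linarith
    set x := min a (S - δ) with hxdef
    have hxδ : δ ≤ x := le_min haδ (by linarith)
    have hxc : x ≤ S - δ := min_le_right _ _
    have hcx_b : S - x ≤ b := by
      rcases le_total a (S - δ) with h' | h'
      · rw [hxdef, min_eq_left h']
        linarith
      · rw [hxdef, min_eq_right h']
        linarith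
    have hpax : p x ≤ p a :=
      hmono (Set.mem_Ici.mpr (by linarith)) (Set.mem_Ici.mpr (by linarith))
        (min_le_left _ _)
    have hpbx : p (S - x) ≤ p b :=
      hmono (Set.mem_Ici.mpr (by linarith)) (Set.mem_Ici.mpr (by linarith)) hcx_b
    have h4 : p δ + p (S - δ) ≤ p x + p (S - x) := by
      have h4' := fourpt hconc (a := δ) (b := S - x) (d := x - δ)
        hδ0.le (by linarith) (by linarith) (by linarith)
      have e1 : S - x + (x - δ) = S - δ := by ring
      have e2 : δ + (x - δ) = x := by ring
      rw [e1, e2] at h4'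
      linarith
    set w := 3 * δ / τ₀ with hwdef
    have hw0 : 0 ≤ w := by positivity
    have hw1 : w ≤ 1 := by
      rw [hwdef, div_le_one (by positivity)]
      linarith
    have hB1 : w * p (τ₀ / 3) ≤ p δ := by
      have hm1 : (τ₀ / 3) ∈ Set.Icc (0:ℝ) τ := ⟨by positivity, by linarith⟩
      have hm2 : (0:ℝ) ∈ Set.Icc (0:ℝ) τ := ⟨le_rfl, hτpos.le⟩
      have hcc := hconc.2 hm1 hm2 hw0 (by linarith : (0:ℝ) ≤ 1 - w) (by ring)
      simp only [smul_eq_mul] at hcc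
      have e : w * (τ₀ / 3) + (1 - w) * 0 = δ := by
        rw [hwdef]; field_simp; ring
      rw [e, hp0] at hcc
      linarith
    have hB2a : p S - p (S - δ) ≤ p τ₀ - p (τ₀ - δ) := by
      have h4'' := fourpt hconc (a := τ₀ - δ) (b := S - δ) (d := δ)
        (by linarith) (by linarith) hδ0.le (by linarith)
      have e1 : S - δ + δ = S := by ring
      have e2 : τ₀ - δ + δ = τ₀ := by ring
      rw [e1, e2] at h4''
      linarith
    have hB2b : p τ₀ - p (τ₀ - δ) ≤ w * p τ₀ - w * p (2 * τ₀ / 3) := by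
      have hm1 : (2 * τ₀ / 3) ∈ Set.Icc (0:ℝ) τ := ⟨by positivity, by linarith⟩
      have hm2 : τ₀ ∈ Set.Icc (0:ℝ) τ := ⟨h0.le, by linarith⟩
      have hcc := hconc.2 hm1 hm2 hw0 (by linarith : (0:ℝ) ≤ 1 - w) (by ring)
      simp only [smul_eq_mul] at hcc
      have e : w * (2 * τ₀ / 3) + (1 - w) * τ₀ = τ₀ - δ := by
        rw [hwdef]; field_simp; ring
      rw [e] at hcc
      have ecc : w * p (2 * τ₀ / 3) + (1 - w) * p τ₀
          = (w * p (2 * τ₀ / 3) + p τ₀) - w * p τ₀ := by ring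
      rw [ecc] at hcc
      linarith
    have hC : δ * ((p (τ₀ / 3) + p (2 * τ₀ / 3) - p τ₀) / (τ₀ / 3))
        = w * p (τ₀ / 3) + w * p (2 * τ₀ / 3) - w * p τ₀ := by
      rw [hwdef]
      field_simp
    have hδC : δ ^ 2 < δ * ((p (τ₀ / 3) + p (2 * τ₀ / 3) - p τ₀) / (τ₀ / 3)) := by
      rw [pow_two]
      exact mul_lt_mul_of_pos_left hd5 hδ0
    linarith only [hpv₁, hpv₂, hsum_eq, hmainlt, h4, hB1, hB2a, hB2b, hC, hδC, hpax, hpbx]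
end

section
/- Let q ≥ 1, λ > 0, θ, μ ≥ 0, and let p : ℝ → ℝ satisfy p(0) = 0, p non-decreasing on [0,∞), and p concave on [0,τ] for some τ > 0, with τ̂ ∈ (0,τ) fixed. Define g_{θ,μ}(t) := p(|t|) + θ·|t|^q + μ·|t − τ̂|^q and h := inf_{t∈ℝ} g_{θ,μ}(t). Let n, m be positive integers with m ≥ 2, let b_1, …, b_n be reals, and for x = (x_{ij}) ∈ ℝ^{n×m} define F(x) := Σ_{j=2}^m |Σ_{i=1}^n b_i x_{ij} − Σ_{i=1}^n b_i x_{i1}|^q + λθ·Σ_{i=1}^n |Σ_{j=1}^m x_{ij}|^q + λμ·Σ_{i=1}^n |Σ_{j=1}^m x_{ij} − τ̂|^q + λ·Σ_{i=1}^n Σ_{j=1}^m p(|x_{ij}|). Then F(x) ≥ n·λ·h for every x ∈ ℝ^{n×m}. -/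
/-- Two-term subadditivity of `p` on `[0,τ]`. -/
lemma p_subadd {p : ℝ → ℝ} {τ : ℝ} (hp0 : p 0 = 0)
    (hconc : ConcaveOn ℝ (Set.Icc 0 τ) p)
    {a b : ℝ} (ha : 0 ≤ a) (hb : 0 ≤ b) (hab : a + b ≤ τ) :
    p (a + b) ≤ p a + p b := by
  rcases eq_or_lt_of_le (by positivity : (0:ℝ) ≤ a + b) with h0 | hpos
  · have ha0 : a = 0 := by linarith [abs_nonneg a]
    have hb0 : b = 0 := by linarith
    simp [ha0, hb0, hp0]
  · have hs : (a + b) ∈ Set.Icc (0:ℝ) τ := ⟨le_of_lt hpos, hab⟩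
    have h0 : (0:ℝ) ∈ Set.Icc (0:ℝ) τ := ⟨le_refl _, le_of_lt (lt_of_lt_of_le hpos hab)⟩
    have h1 := hconc.2 hs h0 (by positivity : (0:ℝ) ≤ a / (a+b))
      (by positivity : (0:ℝ) ≤ b / (a+b)) (by field_simp)
    have h2 := hconc.2 hs h0 (by positivity : (0:ℝ) ≤ b / (a+b))
      (by positivity : (0:ℝ) ≤ a / (a+b)) (by field_simp; ring)
    have ea : (a / (a+b)) • (a+b) + (b / (a+b)) • (0:ℝ) = a := by
      rw [smul_eq_mul, smul_eq_mul, mul_zero, add_zero, div_mul_cancel₀ a (ne_of_gt hpos)]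
    have eb : (b / (a+b)) • (a+b) + (a / (a+b)) • (0:ℝ) = b := by
      rw [smul_eq_mul, smul_eq_mul, mul_zero, add_zero, div_mul_cancel₀ b (ne_of_gt hpos)]
    rw [ea] at h1; rw [eb] at h2
    have hsum : (a / (a+b)) * p (a+b) + (b / (a+b)) * p (a+b) = p (a+b) := by
      field_simp
    simp only [smul_eq_mul, hp0, mul_zero, add_zero] at h1 h2
    nlinarith [h1, h2]

/-- Finite subadditivity: if `a ∈ [0,τ]` and `a ≤ ∑ c j` with `c j ≥ 0`,
then `p a ≤ ∑ p (c j)`. -/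
lemma p_sum {p : ℝ → ℝ} {τ : ℝ} (hp0 : p 0 = 0)
    (hmono : MonotoneOn p (Set.Ici 0))
    (hconc : ConcaveOn ℝ (Set.Icc 0 τ) p)
    {ι : Type*} (S : Finset ι) (c : ι → ℝ) (hc : ∀ j, 0 ≤ c j) :
    ∀ a, 0 ≤ a → a ≤ τ → a ≤ ∑ j ∈ S, c j → p a ≤ ∑ j ∈ S, p (c j) := by
  classical
  induction S using Finset.induction_on with
  | empty =>
    intro a ha0 haτ hale
    simp only [Finset.sum_empty] at hale ⊢
    have : a = 0 := le_antisymm hale ha0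
    simp [this, hp0]
  | insert j S hj ih =>
    intro a ha0 haτ hale
    rw [Finset.sum_insert hj] at hale
    rw [Finset.sum_insert hj]
    set e := min (c j) a with he
    have he0 : 0 ≤ e := le_min (hc j) ha0
    have hea : e ≤ a := min_le_right _ _
    have hSnn : 0 ≤ ∑ i ∈ S, c i := Finset.sum_nonneg fun i _ => hc i
    have hrem : a - e ≤ ∑ i ∈ S, c i := by
      rcases min_cases (c j) a with ⟨h1, _⟩ | ⟨h1, _⟩ <;> rw [he, h1] <;> linarith
    have hsplit : p a ≤ p e + p (a - e) := by
      have := p_subadd hp0 hconc he0 (by linarith : (0:ℝ) ≤ a - e)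
        (by linarith : e + (a - e) ≤ τ)
      simpa using this
    have h1 : p e ≤ p (c j) := hmono (Set.mem_Ici.2 he0) (Set.mem_Ici.2 (hc j)) (min_le_left _ _)
    have h2 : p (a - e) ≤ ∑ i ∈ S, p (c i) := ih (a - e) (by linarith) (by linarith) hrem
    linarith



/-- The objective function `F` of the regularized `L_q`-minimization instance
constructed in the reduction from 3-partition in the proof of Theorem 1 (columns are
indexed by `Fin m`, column `0` playing the role of the first subset). -/
noncomputable def Fobj (q lam θ μ tauhat : ℝ) (p : ℝ → ℝ) (n m : ℕ) [NeZero m]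
    (b : Fin n → ℝ) (x : Fin n → Fin m → ℝ) : ℝ :=
  (∑ j ∈ Finset.univ.erase (0 : Fin m),
      |(∑ i, b i * x i j) - ∑ i, b i * x i 0| ^ q) +
    lam * θ * ∑ i, |∑ j, x i j| ^ q +
    lam * μ * ∑ i, |(∑ j, x i j) - tauhat| ^ q +
    lam * ∑ i, ∑ j, p |x i j|

/-- Inequality (Eq:P_min_value) in the proof of Theorem 1:
`F x ≥ n·λ·h` where `h = ⨅ t, (p |t| + θ·|t|^q + μ·|t − τ̂|^q)`. -/
theorem stmt_15 (q : ℝ) (hq : 1 ≤ q) (lam : ℝ) (hlam : 0 < lam)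
    (θ μ : ℝ) (hθ : 0 ≤ θ) (hμ : 0 ≤ μ)
    (p : ℝ → ℝ) (τ tauhat : ℝ) (hτ : 0 < τ) (hhat : tauhat ∈ Set.Ioo 0 τ)
    (hp0 : p 0 = 0)
    (hmono : MonotoneOn p (Set.Ici 0))
    (hconc : ConcaveOn ℝ (Set.Icc 0 τ) p)
    (n m : ℕ) (hn : 0 < n) [NeZero m] (hm : 2 ≤ m)
    (b : Fin n → ℝ) (x : Fin n → Fin m → ℝ) :
    (n : ℝ) * lam * (⨅ s : ℝ, (p |s| + θ * |s| ^ q + μ * |s - tauhat| ^ q)) ≤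
      Fobj q lam θ μ tauhat p n m b x := by
  unfold Fobj
  have hq0 : (0:ℝ) < q := lt_of_lt_of_le one_pos hq
  set g : ℝ → ℝ := fun s => p |s| + θ * |s| ^ q + μ * |s - tauhat| ^ q with hg
  have hpnn : ∀ t : ℝ, 0 ≤ t → 0 ≤ p t := fun t ht => by
    have := hmono (Set.mem_Ici.2 le_rfl) (Set.mem_Ici.2 ht) ht
    linarith [hp0 ▸ this]
  have hgnn : ∀ s, 0 ≤ g s := fun s => by
    have h1 := hpnn |s| (abs_nonneg s)
    have h2 : (0:ℝ) ≤ |s| ^ q := Real.rpow_nonneg (abs_nonneg s) q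
    have h3 : (0:ℝ) ≤ |s - tauhat| ^ q := Real.rpow_nonneg (abs_nonneg _) q
    have := mul_nonneg hθ h2
    have := mul_nonneg hμ h3
    simp only [hg]; positivity
  have hbdd : BddBelow (Set.range g) := ⟨0, fun y ⟨s, hs⟩ => hs ▸ hgnn s⟩
  -- row bound: for each i, h ≤ θ|s_i|^q + μ|s_i - τ̂|^q + ∑ j p|x i j|
  have hrow : ∀ i : Fin n,
      (⨅ s : ℝ, g s) ≤ θ * |∑ j, x i j| ^ q + μ * |(∑ j, x i j) - tauhat| ^ q
        + ∑ j, p |x i j| := by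
    intro i
    set s := ∑ j, x i j with hs
    have habs : |s| ≤ ∑ j, |x i j| := Finset.abs_sum_le_sum_abs _ _
    by_cases hcase : |s| ≤ τ
    · have hps : p |s| ≤ ∑ j, p |x i j| :=
        p_sum hp0 hmono hconc Finset.univ (fun j => |x i j|) (fun j => abs_nonneg _)
          |s| (abs_nonneg s) hcase habs
      calc (⨅ s : ℝ, g s) ≤ g s := ciInf_le hbdd s
        _ ≤ _ := by simp only [hg]; linarith
    · push_neg at hcase
      have hth : tauhat ≤ ∑ j, |x i j| := by
        linarith [hhat.1, hhat.2]
      have hps : p tauhat ≤ ∑ j, p |x i j| :=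
        p_sum hp0 hmono hconc Finset.univ (fun j => |x i j|) (fun j => abs_nonneg _)
          tauhat (le_of_lt hhat.1) (le_of_lt hhat.2) hth
      have habs1 : |tauhat| = tauhat := abs_of_pos hhat.1
      have hpow : |tauhat| ^ q ≤ |s| ^ q := by
        apply Real.rpow_le_rpow (abs_nonneg _) _ (le_of_lt hq0)
        rw [habs1]; linarith [hhat.2]
      have hzero : |tauhat - tauhat| ^ q = 0 := by
        simp [Real.zero_rpow (ne_of_gt hq0)]
      calc (⨅ s : ℝ, g s) ≤ g tauhat := ciInf_le hbdd tauhat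
        _ = p tauhat + θ * |tauhat| ^ q + μ * |tauhat - tauhat| ^ q := by
            rw [hg]; simp [habs1]
        _ ≤ _ := by
            have h3 : (0:ℝ) ≤ |s - tauhat| ^ q := Real.rpow_nonneg (abs_nonneg _) q
            have := mul_le_mul_of_nonneg_left hpow hθ
            rw [hzero]
            have := mul_nonneg hμ h3
            linarith
  -- sum over rows
  have hsum : (n : ℝ) * (⨅ s : ℝ, g s) ≤
      θ * (∑ i, |∑ j, x i j| ^ q) + μ * (∑ i, |(∑ j, x i j) - tauhat| ^ q)
        + ∑ i, ∑ j, p |x i j| := by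
    have := Finset.sum_le_sum (fun i (_ : i ∈ Finset.univ) => hrow i)
    simp only [Finset.sum_const, Finset.card_univ, Fintype.card_fin, nsmul_eq_mul] at this
    rw [Finset.sum_add_distrib, Finset.sum_add_distrib, ← Finset.mul_sum, ← Finset.mul_sum] at this
    exact this
  have hfirst : (0:ℝ) ≤ ∑ j ∈ Finset.univ.erase (0 : Fin m),
      |(∑ i, b i * x i j) - ∑ i, b i * x i 0| ^ q :=
    Finset.sum_nonneg fun j _ => Real.rpow_nonneg (abs_nonneg _) q
  have := mul_le_mul_of_nonneg_left hsum (le_of_lt hlam)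
  nlinarith [this, hfirst]
end

section
/- Let q ≥ 1, λ > 0, θ, μ ≥ 0, and let p : ℝ → ℝ satisfy p(0) = 0, p non-decreasing on [0,∞), and p concave on [0,τ] for some τ > 0, with τ̂ ∈ (0,τ) fixed. Define g_{θ,μ}(t) := p(|t|) + θ·|t|^q + μ·|t − τ̂|^q, and assume g_{θ,μ} attains its global minimum h over ℝ at some point t*. Let n, m be positive integers with m ≥ 2, let b_1, …, b_n be reals, and suppose {1, …, n} is partitioned into m pairwise disjoint sets S_1, …, S_m with Σ_{i∈S_j} b_i = B for every j. Define x ∈ ℝ^{n×m} by x_{ij} := t* if i ∈ S_j and x_{ij} := 0 otherwise, and let F be as follows: F(x) := Σ_{j=2}^m |Σ_{i=1}^n b_i x_{ij} − Σ_{i=1}^n b_i x_{i1}|^q + λθ·Σ_{i=1}^n |Σ_{j=1}^m x_{ij}|^q + λμ·Σ_{i=1}^n |Σ_{j=1}^m x_{ij} − τ̂|^q + λ·Σ_{i=1}^n Σ_{j=1}^m p(|x_{ij}|). Then F(x) = n·λ·h; in particular, x is a global minimizer of F and the minimum value of F over ℝ^{n×m} equals n·λ·h. -/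
private lemma p_nonneg' {p : ℝ → ℝ} (hp0 : p 0 = 0)
    (hmono : MonotoneOn p (Set.Ici 0)) {u : ℝ} (hu : 0 ≤ u) : 0 ≤ p u := by
  have h := hmono (Set.mem_Ici.mpr le_rfl) (Set.mem_Ici.mpr hu) hu
  rwa [hp0] at h

private lemma subadd' {p : ℝ → ℝ} {τ : ℝ} (hτ : 0 < τ) (hp0 : p 0 = 0)
    (hmono : MonotoneOn p (Set.Ici 0)) (hconc : ConcaveOn ℝ (Set.Icc 0 τ) p)
    {m : ℕ} (a : Fin m → ℝ) (ha : ∀ j, 0 ≤ a j) :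
    p (min (∑ j, a j) τ) ≤ ∑ j, p (a j) := by
  set A := ∑ j, a j with hA
  have hA0 : 0 ≤ A := Finset.sum_nonneg fun j _ => ha j
  set c := min A τ with hc
  have hc0 : 0 ≤ c := le_min hA0 hτ.le
  have hcτ : c ≤ τ := min_le_right _ _
  rcases eq_or_lt_of_le hc0 with h0 | hcpos
  · rw [← h0, hp0]
    exact Finset.sum_nonneg fun j _ => p_nonneg' hp0 hmono (ha j)
  · have hpc : 0 ≤ p c := p_nonneg' hp0 hmono hc0
    have key : ∀ j, (p c / c) * min (a j) c ≤ p (a j) := by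
      intro j
      rcases le_or_gt c (a j) with h | h
      · rw [min_eq_right h, div_mul_cancel₀ _ (ne_of_gt hcpos)]
        exact hmono (Set.mem_Ici.mpr hc0) (Set.mem_Ici.mpr (ha j)) h
      · rw [min_eq_left h.le]
        have hcon := hconc.2 (Set.mem_Icc.mpr ⟨hc0, hcτ⟩)
          (Set.mem_Icc.mpr ⟨le_rfl, hτ.le⟩)
          (show (0:ℝ) ≤ a j / c from div_nonneg (ha j) hc0)
          (show (0:ℝ) ≤ 1 - a j / c by
            have : a j / c ≤ 1 := (div_le_one hcpos).mpr h.le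
            linarith)
          (by ring)
        simp only [smul_eq_mul, mul_zero, add_zero, hp0] at hcon
        have he : a j / c * c = a j := div_mul_cancel₀ _ (ne_of_gt hcpos)
        rw [he] at hcon
        calc p c / c * a j = a j / c * p c := by ring
          _ ≤ p (a j) := by linarith
    have hmins : c ≤ ∑ j, min (a j) c := by
      by_cases hall : ∀ j, a j ≤ c
      · have : ∑ j, min (a j) c = A := by
          rw [hA]; exact Finset.sum_congr rfl fun j _ => min_eq_left (hall j)
        rw [this]; exact min_le_left _ _
      · push_neg at hall
        obtain ⟨j0, hj0⟩ := hall
        calc c = min (a j0) c := (min_eq_right hj0.le).symm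
          _ ≤ ∑ j, min (a j) c := Finset.single_le_sum
              (fun j _ => le_min (ha j) hc0) (Finset.mem_univ j0)
    calc p c = (p c / c) * c := by field_simp
      _ ≤ (p c / c) * ∑ j, min (a j) c :=
          mul_le_mul_of_nonneg_left hmins (by positivity)
      _ = ∑ j, (p c / c) * min (a j) c := Finset.mul_sum _ _ _
      _ ≤ ∑ j, p (a j) := Finset.sum_le_sum fun j _ => key j

private lemma rowbound' {p : ℝ → ℝ} {τ tauhat θ μ q : ℝ} (hq : 1 ≤ q)
    (hθ : 0 ≤ θ) (hμ : 0 ≤ μ) (hτ : 0 < τ) (hhat : tauhat ∈ Set.Ioo 0 τ)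
    (hp0 : p 0 = 0) (hmono : MonotoneOn p (Set.Ici 0))
    (hconc : ConcaveOn ℝ (Set.Icc 0 τ) p)
    {tstar : ℝ} (hmin : ∀ t : ℝ, gfun p θ μ q tauhat tstar ≤ gfun p θ μ q tauhat t)
    {m : ℕ} (y : Fin m → ℝ) :
    gfun p θ μ q tauhat tstar ≤
      θ * |∑ j, y j| ^ q + μ * |(∑ j, y j) - tauhat| ^ q + ∑ j, p |y j| := by
  obtain ⟨hh1, hh2⟩ := hhat
  set s := ∑ j, y j with hs
  have hq0 : (0:ℝ) ≤ q := le_trans zero_le_one hq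
  have hAs : |s| ≤ ∑ j, |y j| := Finset.abs_sum_le_sum_abs _ _
  set t := max (-τ) (min τ s) with ht
  have habc : |t| ≤ |s| ∧ |t| ≤ τ ∧ |t - tauhat| ≤ |s - tauhat| := by
    rcases le_total τ s with hc | hc
    · have htv : t = τ := by rw [ht, min_eq_left hc, max_eq_right (by linarith)]
      refine ⟨?_, le_of_eq (by rw [htv]; exact abs_of_pos hτ), ?_⟩
      · rw [htv, abs_of_pos hτ, abs_of_pos (lt_of_lt_of_le hτ hc)]; exact hc
      · rw [htv, abs_of_nonneg (by linarith), abs_of_nonneg (by linarith)]; linarith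
    · rcases le_total s (-τ) with hc2 | hc2
      · have htv : t = -τ := by rw [ht, min_eq_right hc, max_eq_left hc2]
        refine ⟨?_, ?_, ?_⟩
        · rw [htv, abs_neg, abs_of_pos hτ, abs_of_nonpos (by linarith)]; linarith
        · rw [htv, abs_neg, abs_of_pos hτ]
        · rw [htv, abs_of_nonpos (by linarith), abs_of_nonpos (by linarith)]; linarith
      · have htv : t = s := by rw [ht, min_eq_right hc, max_eq_right hc2]
        exact ⟨le_of_eq (by rw [htv]), by rw [htv]; exact abs_le.mpr ⟨hc2, hc⟩,
          le_of_eq (by rw [htv])⟩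
  obtain ⟨hts, htτ, hthat⟩ := habc
  have h1 : p |t| ≤ ∑ j, p |y j| := by
    have hle : |t| ≤ min (∑ j, |y j|) τ := le_min (hts.trans hAs) htτ
    calc p |t| ≤ p (min (∑ j, |y j|) τ) :=
          hmono (Set.mem_Ici.mpr (abs_nonneg _))
            (Set.mem_Ici.mpr (le_trans (abs_nonneg t) hle)) hle
      _ ≤ ∑ j, p |y j| := subadd' hτ hp0 hmono hconc _ (fun j => abs_nonneg _)
  have i1 : θ * |t| ^ q ≤ θ * |s| ^ q :=
    mul_le_mul_of_nonneg_left (Real.rpow_le_rpow (abs_nonneg _) hts hq0) hθ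
  have i2 : μ * |t - tauhat| ^ q ≤ μ * |s - tauhat| ^ q :=
    mul_le_mul_of_nonneg_left (Real.rpow_le_rpow (abs_nonneg _) hthat hq0) hμ
  have hg : gfun p θ μ q tauhat t = p |t| + θ * |t| ^ q + μ * |t - tauhat| ^ q := rfl
  have := hmin t
  rw [hg] at this
  linarith

/-- Forward direction of the correctness of the reduction in the proof of Theorem 1:
given an equitable partition `S₁, …, S_m` of `{1, …, n}` (each with `b`-sum `B`), the
point `x` with `x i j = t*` if `i ∈ S j` and `0` otherwise satisfies
`F x = n·λ·h`; in particular `x` is a global minimizer of `F`, whose minimum value is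
`n·λ·h`, where `h = g_{θ,μ}(t*)` is the global minimum of `g_{θ,μ}` attained at `t*`. -/
theorem stmt_16 (q : ℝ) (hq : 1 ≤ q) (lam : ℝ) (hlam : 0 < lam)
    (θ μ : ℝ) (hθ : 0 ≤ θ) (hμ : 0 ≤ μ)
    (p : ℝ → ℝ) (τ tauhat : ℝ) (hτ : 0 < τ) (hhat : tauhat ∈ Set.Ioo 0 τ)
    (hp0 : p 0 = 0)
    (hmono : MonotoneOn p (Set.Ici 0))
    (hconc : ConcaveOn ℝ (Set.Icc 0 τ) p)
    (tstar : ℝ)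
    (hmin : ∀ t : ℝ, gfun p θ μ q tauhat tstar ≤ gfun p θ μ q tauhat t)
    (n m : ℕ) (hn : 0 < n) [NeZero m] (hm : 2 ≤ m)
    (b : Fin n → ℝ) (B : ℝ)
    (S : Fin m → Finset (Fin n))
    (hpart : ∀ i : Fin n, ∃! j : Fin m, i ∈ S j)
    (hequit : ∀ j : Fin m, ∑ i ∈ S j, b i = B)
    (x : Fin n → Fin m → ℝ)
    (hx : ∀ i j, x i j = if i ∈ S j then tstar else 0) :
    Fobj q lam θ μ tauhat p n m b x = (n : ℝ) * lam * gfun p θ μ q tauhat tstar ∧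
      ∀ y : Fin n → Fin m → ℝ,
        (n : ℝ) * lam * gfun p θ μ q tauhat tstar ≤ Fobj q lam θ μ tauhat p n m b y := by
  have hqne : q ≠ 0 := by positivity
  constructor
  · -- Part 1: value of F at x
    choose ji hmem huniq using hpart
    have hrow : ∀ i, ∑ j, x i j = tstar := by
      intro i
      have : ∀ j, x i j = if j = ji i then tstar else 0 := by
        intro j
        rcases eq_or_ne j (ji i) with h | h
        · subst h; simp [hx, hmem i]
        · have hni : i ∉ S j := fun hc => h (huniq i j hc)
          simp [hx, hni, h]
      rw [Finset.sum_congr rfl fun j _ => this j,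
        Finset.sum_ite_eq' Finset.univ (ji i) (fun _ => tstar)]
      simp
    have hpsum : ∀ i, ∑ j, p |x i j| = p |tstar| := by
      intro i
      have : ∀ j, p |x i j| = if j = ji i then p |tstar| else 0 := by
        intro j
        rcases eq_or_ne j (ji i) with h | h
        · subst h; simp [hx, hmem i]
        · have hni : i ∉ S j := fun hc => h (huniq i j hc)
          simp [hx, hni, h, hp0]
      rw [Finset.sum_congr rfl fun j _ => this j,
        Finset.sum_ite_eq' Finset.univ (ji i) (fun _ => p |tstar|)]
      simp
    have hcol : ∀ j : Fin m, ∑ i, b i * x i j = B * tstar := by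
      intro j
      have : ∀ i, b i * x i j = if i ∈ S j then b i * tstar else 0 := by
        intro i; rw [hx]; split <;> simp
      rw [Finset.sum_congr rfl fun i _ => this i, Finset.sum_ite_mem,
        Finset.univ_inter, ← Finset.sum_mul, hequit j]
    simp only [Fobj, gfun, hrow, hpsum, hcol, sub_self, abs_zero,
      Real.zero_rpow hqne, Finset.sum_const, smul_eq_mul, mul_zero,
      Finset.card_univ, Fintype.card_fin]
    ring
  · -- Part 2: lower bound
    intro y
    have hrow : ∀ i : Fin n, gfun p θ μ q tauhat tstar ≤
        θ * |∑ j, y i j| ^ q + μ * |(∑ j, y i j) - tauhat| ^ q + ∑ j, p |y i j| :=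
      fun i => rowbound' hq hθ hμ hτ hhat hp0 hmono hconc hmin (y i)
    have hsum : (n : ℝ) * gfun p θ μ q tauhat tstar ≤
        ∑ i : Fin n, (θ * |∑ j, y i j| ^ q + μ * |(∑ j, y i j) - tauhat| ^ q
          + ∑ j, p |y i j|) := by
      calc (n : ℝ) * gfun p θ μ q tauhat tstar
          = ∑ _i : Fin n, gfun p θ μ q tauhat tstar := by
            simp [Finset.sum_const, Finset.card_univ, mul_comm]
        _ ≤ _ := Finset.sum_le_sum fun i _ => hrow i
    have hT1 : 0 ≤ ∑ j ∈ Finset.univ.erase (0 : Fin m),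
        |(∑ i, b i * y i j) - ∑ i, b i * y i 0| ^ q :=
      Finset.sum_nonneg fun j _ => Real.rpow_nonneg (abs_nonneg _) q
    have expand : ∑ i : Fin n, (θ * |∑ j, y i j| ^ q
          + μ * |(∑ j, y i j) - tauhat| ^ q + ∑ j, p |y i j|)
        = θ * ∑ i, |∑ j, y i j| ^ q + μ * ∑ i, |(∑ j, y i j) - tauhat| ^ q
          + ∑ i, ∑ j, p |y i j| := by
      rw [Finset.sum_add_distrib, Finset.sum_add_distrib, Finset.mul_sum,
        Finset.mul_sum]
    rw [expand] at hsum
    have hmul : (n : ℝ) * lam * gfun p θ μ q tauhat tstar ≤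
        lam * (θ * ∑ i, |∑ j, y i j| ^ q + μ * ∑ i, |(∑ j, y i j) - tauhat| ^ q
          + ∑ i, ∑ j, p |y i j|) := by
      calc (n : ℝ) * lam * gfun p θ μ q tauhat tstar
          = lam * ((n : ℝ) * gfun p θ μ q tauhat tstar) := by ring
        _ ≤ _ := mul_le_mul_of_nonneg_left hsum hlam.le
    simp only [Fobj]
    nlinarith [hT1, hmul]
end
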